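/- arXiv:2004.01293 — 6 statements merged into one kernel-verified Lean document; each statement's English description precedes it below -/
import Mathlib

section
/- Let G be a weighted directed bipartite graph with source vertices S and destination vertices D, and let M_coll denote the (functional or structural) motif adjacency matrix of the collider motif M_coll in G. Then for all vertices i,j: (M_coll)_{ij} = 1{i ≠ j} · Σ_{k ∈ D with (i,k) ∈ E and (j,k) ∈ E} (1/2)·[W((i,k)) + W((j,k))]. -/
open scoped Classical BigOperators Matrix

noncomputable section

/-- A motif on `m` vertices: a weakly connected loopless directed graph on the vertex set
`Fin m`, given by its edge set. -/
structure Motif (m : ℕ) where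
  edges : Finset (Fin m × Fin m)
  irrefl : ∀ e ∈ edges, e.1 ≠ e.2
  connected : (SimpleGraph.fromRel (fun u v => (u, v) ∈ edges)).Connected

variable {n m : ℕ}

/-- Edge set of the weighted directed graph with weight matrix `G`:
`E = {(i,j) : i ≠ j and G i j > 0}`. -/
def edgeFinset (G : Matrix (Fin n) (Fin n) ℝ) : Finset (Fin n × Fin n) :=
  Finset.univ.filter fun p => p.1 ≠ p.2 ∧ 0 < G p.1 p.2

/-- Directed-edge indicator matrix `J`. -/
def Jmat (G : Matrix (Fin n) (Fin n) ℝ) : Matrix (Fin n) (Fin n) ℝ :=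
  fun i j => if (i, j) ∈ edgeFinset G then 1 else 0

/-- Single-edge indicator matrix `J_s`. -/
def Jsmat (G : Matrix (Fin n) (Fin n) ℝ) : Matrix (Fin n) (Fin n) ℝ :=
  fun i j => if (i, j) ∈ edgeFinset G ∧ (j, i) ∉ edgeFinset G then 1 else 0

/-- Double-edge indicator matrix `J_d`. -/
def Jdmat (G : Matrix (Fin n) (Fin n) ℝ) : Matrix (Fin n) (Fin n) ℝ :=
  fun i j => if (i, j) ∈ edgeFinset G ∧ (j, i) ∈ edgeFinset G then 1 else 0

/-- Missing-edge indicator matrix `J_0`. -/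
def J0mat (G : Matrix (Fin n) (Fin n) ℝ) : Matrix (Fin n) (Fin n) ℝ :=
  fun i j => if (i, j) ∉ edgeFinset G ∧ (j, i) ∉ edgeFinset G ∧ i ≠ j then 1 else 0

/-- Vertex-distinct indicator matrix `J_n`. -/
def Jnmat (n : ℕ) : Matrix (Fin n) (Fin n) ℝ :=
  fun i j => if i ≠ j then 1 else 0

/-- Single-edge weighted matrix `G_s`. -/
def Gsmat (G : Matrix (Fin n) (Fin n) ℝ) : Matrix (Fin n) (Fin n) ℝ :=
  fun i j => if (i, j) ∈ edgeFinset G ∧ (j, i) ∉ edgeFinset G then G i j else 0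

/-- Double-edge weighted matrix `G_d`. -/
def Gdmat (G : Matrix (Fin n) (Fin n) ℝ) : Matrix (Fin n) (Fin n) ℝ :=
  fun i j => if (i, j) ∈ edgeFinset G ∧ (j, i) ∈ edgeFinset G then G i j + G j i else 0

/-- Entrywise (Hadamard) product of matrices. -/
def had (A B : Matrix (Fin n) (Fin n) ℝ) : Matrix (Fin n) (Fin n) ℝ :=
  fun i j => A i j * B i j

/-- Well-formedness of a candidate subgraph `H = (V_H, E_H)` of a graph on `Fin n`:
each edge joins two distinct vertices of `H`. -/
def IsGraphPair (H : Finset (Fin n) × Finset (Fin n × Fin n)) : Prop :=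
  ∀ e ∈ H.2, e.1 ∈ H.1 ∧ e.2 ∈ H.1 ∧ e.1 ≠ e.2

/-- `φ` is an isomorphism from the motif `M` onto the graph `H = (V_H, E_H)`. -/
def IsIso (M : Motif m) (H : Finset (Fin n) × Finset (Fin n × Fin n))
    (φ : Fin m → Fin n) : Prop :=
  Function.Injective φ ∧ Finset.image φ Finset.univ = H.1 ∧
    ∀ u v : Fin m, (u, v) ∈ M.edges ↔ (φ u, φ v) ∈ H.2

/-- `H` is a functional instance of motif `M` in the graph with weight matrix `G`,
i.e. `M ≅ H ≤ G`. -/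
def IsFuncInstance (M : Motif m) (G : Matrix (Fin n) (Fin n) ℝ)
    (H : Finset (Fin n) × Finset (Fin n × Fin n)) : Prop :=
  IsGraphPair H ∧ H.2 ⊆ edgeFinset G ∧ ∃ φ, IsIso M H φ

/-- `H` is a structural instance of motif `M` in the graph with weight matrix `G`,
i.e. `M ≅ H < G` (`H` an induced subgraph: `E_H = E ∩ (V_H × V_H)`). -/
def IsStrucInstance (M : Motif m) (G : Matrix (Fin n) (Fin n) ℝ)
    (H : Finset (Fin n) × Finset (Fin n × Fin n)) : Prop :=
  IsGraphPair H ∧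
    H.2 = (edgeFinset G).filter (fun e => e.1 ∈ H.1 ∧ e.2 ∈ H.1) ∧
    ∃ φ, IsIso M H φ

/-- `{i, j}` is an anchored pair of the instance `H`: there is an isomorphism `φ` from
`M` to `H` and distinct anchors `a, b ∈ A` with `φ a = i` and `φ b = j`. -/
def AnchoredPair (M : Motif m) (A : Finset (Fin m))
    (H : Finset (Fin n) × Finset (Fin n × Fin n)) (i j : Fin n) : Prop :=
  ∃ φ, IsIso M H φ ∧ ∃ a ∈ A, ∃ b ∈ A, a ≠ b ∧ φ a = i ∧ φ b = j

/-- The functional motif adjacency matrix of the motif `(M, A)` in the graph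
with weight matrix `G`. -/
def mamFunc (M : Motif m) (A : Finset (Fin m)) (G : Matrix (Fin n) (Fin n) ℝ) :
    Matrix (Fin n) (Fin n) ℝ :=
  fun i j => (1 / (M.edges.card : ℝ)) *
    ∑ H : Finset (Fin n) × Finset (Fin n × Fin n),
      if IsFuncInstance M G H ∧ AnchoredPair M A H i j then ∑ e ∈ H.2, G e.1 e.2 else 0

/-- The structural motif adjacency matrix of the motif `(M, A)` in the graph
with weight matrix `G`. -/
def mamStruc (M : Motif m) (A : Finset (Fin m)) (G : Matrix (Fin n) (Fin n) ℝ) :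
    Matrix (Fin n) (Fin n) ℝ :=
  fun i j => (1 / (M.edges.card : ℝ)) *
    ∑ H : Finset (Fin n) × Finset (Fin n × Fin n),
      if IsStrucInstance M G H ∧ AnchoredPair M A H i j then ∑ e ∈ H.2, G e.1 e.2 else 0

/-- Auxiliary: structure of an isomorphic copy of the collider motif. -/
lemma collider_iso_struct (Mcoll : Motif 3)
    (hM : Mcoll.edges = {((0 : Fin 3), 1), (2, 1)})
    (H : Finset (Fin n) × Finset (Fin n × Fin n)) (φ : Fin 3 → Fin n)
    (hGP : IsGraphPair H) (hiso : IsIso Mcoll H φ) :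
    H.1 = {φ 0, φ 1, φ 2} ∧ H.2 = {(φ 0, φ 1), (φ 2, φ 1)} := by
  obtain ⟨hinj, himg, hiff⟩ := hiso
  refine ⟨?_, ?_⟩
  · rw [← himg]
    have h3 : (Finset.univ : Finset (Fin 3)) = {0, 1, 2} := by decide
    rw [h3]
    simp [Finset.image_insert]
  · ext e
    constructor
    · intro he
      obtain ⟨h1, h2, -⟩ := hGP e he
      rw [← himg] at h1 h2
      obtain ⟨u, -, hu⟩ := Finset.mem_image.mp h1
      obtain ⟨v, -, hv⟩ := Finset.mem_image.mp h2
      have hm : (u, v) ∈ Mcoll.edges := (hiff u v).mpr (by rw [hu, hv]; exact he)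
      rw [hM] at hm
      simp only [Finset.mem_insert, Finset.mem_singleton, Prod.mk.injEq, Prod.ext_iff] at hm ⊢
      rcases hm with ⟨rfl, rfl⟩ | ⟨rfl, rfl⟩
      · exact Or.inl ⟨hu.symm, hv.symm⟩
      · exact Or.inr ⟨hu.symm, hv.symm⟩
    · intro he
      simp only [Finset.mem_insert, Finset.mem_singleton] at he
      rcases he with rfl | rfl
      · exact (hiff 0 1).mp (by rw [hM]; decide)
      · exact (hiff 2 1).mp (by rw [hM]; decide)

/-- Auxiliary: the canonical collider isomorphism. -/
lemma collider_iso_build (G : Matrix (Fin n) (Fin n) ℝ) (i j k : Fin n)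
    (Mcoll : Motif 3) (hM : Mcoll.edges = {((0 : Fin 3), 1), (2, 1)})
    (hij : i ≠ j) (hikne : i ≠ k) (hjkne : j ≠ k) :
    IsIso Mcoll (({i, j, k} : Finset (Fin n)), ({(i, k), (j, k)} : Finset (Fin n × Fin n)))
      (fun u => if u = 0 then i else if u = 1 then k else j) := by
  refine ⟨?_, ?_, ?_⟩
  · intro u v huv
    fin_cases u <;> fin_cases v <;> simp only [] at huv ⊢ <;>
      first
        | rfl
        | (exfalso; revert huv; norm_num; tauto)
  · have h3 : (Finset.univ : Finset (Fin 3)) = {0, 1, 2} := by decide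
    rw [h3]
    simp only [Finset.image_insert, Finset.image_singleton]
    norm_num
    ext x
    simp only [Finset.mem_insert, Finset.mem_singleton]
    tauto
  · intro u v
    rw [hM]
    fin_cases u <;> fin_cases v <;>
      simp only [Finset.mem_insert, Finset.mem_singleton, Prod.mk.injEq] <;>
      norm_num <;> tauto

/-- **Colliders in bipartite graphs.** -/
theorem collider_mam_bipartite
    (G : Matrix (Fin n) (Fin n) ℝ)
    (hpos : ∀ i j, 0 ≤ G i j) (hdiag : ∀ i, G i i = 0)
    (S D : Finset (Fin n)) (hdisj : Disjoint S D) (hcover : S ∪ D = Finset.univ)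
    (hbip : ∀ p ∈ edgeFinset G, p.1 ∈ S ∧ p.2 ∈ D)
    (Mcoll : Motif 3) (hM : Mcoll.edges = {((0 : Fin 3), 1), (2, 1)})
    (A : Finset (Fin 3)) (hA : A = {0, 2}) (i j : Fin n) :
    mamFunc Mcoll A G i j =
      (if i ≠ j then (1 : ℝ) else 0) *
        ∑ k ∈ D.filter (fun k => (i, k) ∈ edgeFinset G ∧ (j, k) ∈ edgeFinset G),
          (1 / 2) * (G i k + G j k) ∧
    mamStruc Mcoll A G i j =
      (if i ≠ j then (1 : ℝ) else 0) *
        ∑ k ∈ D.filter (fun k => (i, k) ∈ edgeFinset G ∧ (j, k) ∈ edgeFinset G),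
          (1 / 2) * (G i k + G j k) := by
  classical
  have hcard2 : Mcoll.edges.card = 2 := by rw [hM]; decide
  by_cases hij : i = j
  · have hnone : ∀ H : Finset (Fin n) × Finset (Fin n × Fin n),
        ¬ AnchoredPair Mcoll A H i j := by
      rintro H ⟨φ, ⟨hinj, -, -⟩, a, ha, b, hb, hab, hai, hbj⟩
      exact hab (hinj (by rw [hai, hbj, hij]))
    constructor <;>
    · simp only [mamFunc, mamStruc]
      rw [Finset.sum_eq_zero fun H _ => if_neg fun h => hnone H h.2, mul_zero,
        if_neg (fun h => h hij), zero_mul]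
  · -- main case: i ≠ j
    set T := D.filter (fun k => (i, k) ∈ edgeFinset G ∧ (j, k) ∈ edgeFinset G) with hT
    set Hk : Fin n → Finset (Fin n) × Finset (Fin n × Fin n) :=
      fun k => ({i, j, k}, {(i, k), (j, k)}) with hHk
    have hmemT : ∀ k, k ∈ T ↔ k ∈ D ∧ (i, k) ∈ edgeFinset G ∧ (j, k) ∈ edgeFinset G := by
      intro k; simp [hT, Finset.mem_filter]
    -- backward: each k ∈ T yields an instance
    have hback : ∀ k ∈ T, IsFuncInstance Mcoll G (Hk k) ∧ IsStrucInstance Mcoll G (Hk k) ∧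
        AnchoredPair Mcoll A (Hk k) i j := by
      intro k hk
      obtain ⟨hkD, hik, hjk⟩ := (hmemT k).mp hk
      have hiS : i ∈ S := (hbip _ hik).1
      have hjS : j ∈ S := (hbip _ hjk).1
      have hikne : i ≠ k := fun h => Finset.disjoint_left.mp hdisj hiS (h ▸ hkD)
      have hjkne : j ≠ k := fun h => Finset.disjoint_left.mp hdisj hjS (h ▸ hkD)
      have hGP : IsGraphPair (Hk k) := by
        intro e he
        simp only [hHk, Finset.mem_insert, Finset.mem_singleton] at he
        rcases he with rfl | rfl <;> simp [hHk, hikne, hjkne]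
      set φ : Fin 3 → Fin n := fun u => if u = 0 then i else if u = 1 then k else j with hφ
      have hφ0 : φ 0 = i := rfl
      have hφ2 : φ 2 = j := rfl
      have hiso : IsIso Mcoll (Hk k) φ :=
        collider_iso_build G i j k Mcoll hM hij hikne hjkne
      have hsub : (Hk k).2 ⊆ edgeFinset G := by
        intro e he
        simp only [hHk, Finset.mem_insert, Finset.mem_singleton] at he
        rcases he with rfl | rfl <;> assumption
      have hstruc : (Hk k).2 =
          (edgeFinset G).filter (fun e => e.1 ∈ (Hk k).1 ∧ e.2 ∈ (Hk k).1) := by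
        ext e
        simp only [Finset.mem_filter]
        constructor
        · intro he
          refine ⟨hsub he, (hGP e he).1, (hGP e he).2.1⟩
        · rintro ⟨he, h1, h2⟩
          obtain ⟨heS, heD⟩ := hbip e he
          simp only [hHk, Finset.mem_insert, Finset.mem_singleton] at h1 h2 ⊢
          have h2k : e.2 = k := by
            rcases h2 with h | h | h
            · exact absurd (h ▸ heD) (Finset.disjoint_left.mp hdisj hiS)
            · exact absurd (h ▸ heD) (Finset.disjoint_left.mp hdisj hjS)
            · exact h
          have h1ik : e.1 = i ∨ e.1 = j := by
            rcases h1 with h | h | h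
            · exact Or.inl h
            · exact Or.inr h
            · exact absurd (h ▸ heS) (Finset.disjoint_left.mp hdisj · hkD)
          rcases h1ik with h | h
          · exact Or.inl (Prod.ext h h2k)
          · exact Or.inr (Prod.ext h h2k)
      have hanch : AnchoredPair Mcoll A (Hk k) i j :=
        ⟨φ, hiso, 0, by simp [hA], 2, by simp [hA], by decide, hφ0, hφ2⟩
      exact ⟨⟨hGP, hsub, φ, hiso⟩, ⟨hGP, hstruc, φ, hiso⟩, hanch⟩
    -- forward: any instance anchored at (i, j) is of the form Hk k
    have hfwd : ∀ H : Finset (Fin n) × Finset (Fin n × Fin n),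
        IsGraphPair H → H.2 ⊆ edgeFinset G → AnchoredPair Mcoll A H i j →
        ∃ k ∈ T, H = Hk k := by
      rintro H hGP hsub ⟨ψ, hiso, a, ha, b, hb, hab, hai, hbj⟩
      obtain ⟨h1, h2⟩ := collider_iso_struct Mcoll hM H ψ hGP hiso
      rw [hA] at ha hb
      simp only [Finset.mem_insert, Finset.mem_singleton] at ha hb
      have hcases : (a = 0 ∧ b = 2) ∨ (a = 2 ∧ b = 0) := by
        rcases ha with rfl | rfl <;> rcases hb with rfl | rfl
        · exact absurd rfl hab
        · exact Or.inl ⟨rfl, rfl⟩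
        · exact Or.inr ⟨rfl, rfl⟩
        · exact absurd rfl hab
      rcases hcases with ⟨rfl, rfl⟩ | ⟨rfl, rfl⟩
      · -- ψ 0 = i, ψ 2 = j
        refine ⟨ψ 1, ?_, ?_⟩
        · have hik : (i, ψ 1) ∈ edgeFinset G := hsub (by rw [h2, ← hai]; simp)
          have hjk : (j, ψ 1) ∈ edgeFinset G := hsub (by rw [h2, ← hbj]; simp)
          exact (hmemT _).mpr ⟨(hbip _ hik).2, hik, hjk⟩
        · refine Prod.ext ?_ ?_
          · simp only [hHk]
            rw [h1, ← hai, ← hbj]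
            show _ = ({ψ 0, ψ 2, ψ 1} : Finset (Fin n))
            ext x
            simp only [Finset.mem_insert, Finset.mem_singleton]
            tauto
          · simp only [hHk]
            rw [h2, ← hai, ← hbj]
      · -- ψ 2 = i, ψ 0 = j
        refine ⟨ψ 1, ?_, ?_⟩
        · have hik : (i, ψ 1) ∈ edgeFinset G := hsub (by rw [h2, ← hai]; simp)
          have hjk : (j, ψ 1) ∈ edgeFinset G := hsub (by rw [h2, ← hbj]; simp)
          exact (hmemT _).mpr ⟨(hbip _ hik).2, hik, hjk⟩
        · refine Prod.ext ?_ ?_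
          · simp only [hHk]
            rw [h1, ← hai, ← hbj]
            show _ = ({ψ 2, ψ 0, ψ 1} : Finset (Fin n))
            ext x
            simp only [Finset.mem_insert, Finset.mem_singleton]
            tauto
          · simp only [hHk]
            rw [h2, ← hai, ← hbj]
            show _ = ({(ψ 2, ψ 1), (ψ 0, ψ 1)} : Finset (Fin n × Fin n))
            ext e
            simp only [Finset.mem_insert, Finset.mem_singleton]
            tauto
    -- sum computation
    have hsum : ∀ P : Finset (Fin n) × Finset (Fin n × Fin n) → Prop,
        (∀ H, P H ↔ ∃ k ∈ T, H = Hk k) →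
        (∑ H : Finset (Fin n) × Finset (Fin n × Fin n),
          if P H then (∑ e ∈ H.2, G e.1 e.2) else 0) = ∑ k ∈ T, (G i k + G j k) := by
      intro P hP
      rw [← Finset.sum_filter]
      have himg : Finset.univ.filter P = T.image Hk := by
        ext H
        simp only [Finset.mem_filter, Finset.mem_univ, true_and, Finset.mem_image, hP]
        constructor <;> rintro ⟨k, hk, h⟩ <;> exact ⟨k, hk, h.symm⟩
      rw [himg, Finset.sum_image]
      · refine Finset.sum_congr rfl fun k hk => ?_
        show ∑ e ∈ ({(i, k), (j, k)} : Finset (Fin n × Fin n)), G e.1 e.2 = G i k + G j k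
        rw [Finset.sum_pair (by simp [hij])]
      · intro k₁ h₁ k₂ h₂ heq
        have hmem : (i, k₁) ∈ (Hk k₂).2 := by rw [← heq]; simp [hHk]
        simp only [hHk, Finset.mem_insert, Finset.mem_singleton, Prod.mk.injEq] at hmem
        rcases hmem with ⟨-, h⟩ | ⟨-, h⟩ <;> exact h
    have hfuncChar : ∀ H : Finset (Fin n) × Finset (Fin n × Fin n),
        (IsFuncInstance Mcoll G H ∧ AnchoredPair Mcoll A H i j) ↔ ∃ k ∈ T, H = Hk k := by
      intro H
      constructor
      · rintro ⟨⟨hGP, hsub, -⟩, hanch⟩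
        exact hfwd H hGP hsub hanch
      · rintro ⟨k, hk, rfl⟩
        exact ⟨(hback k hk).1, (hback k hk).2.2⟩
    have hstrucChar : ∀ H : Finset (Fin n) × Finset (Fin n × Fin n),
        (IsStrucInstance Mcoll G H ∧ AnchoredPair Mcoll A H i j) ↔ ∃ k ∈ T, H = Hk k := by
      intro H
      constructor
      · rintro ⟨⟨hGP, hE, -⟩, hanch⟩
        exact hfwd H hGP (hE ▸ Finset.filter_subset _ _) hanch
      · rintro ⟨k, hk, rfl⟩
        exact ⟨(hback k hk).2.1, (hback k hk).2.2⟩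
    have hs1 : (∑ H : Finset (Fin n) × Finset (Fin n × Fin n),
        if IsFuncInstance Mcoll G H ∧ AnchoredPair Mcoll A H i j then
          ∑ e ∈ H.2, G e.1 e.2 else 0) = ∑ k ∈ T, (G i k + G j k) :=
      by have h := hsum _ hfuncChar; convert h using 2 <;> congr
    have hs2 : (∑ H : Finset (Fin n) × Finset (Fin n × Fin n),
        if IsStrucInstance Mcoll G H ∧ AnchoredPair Mcoll A H i j then
          ∑ e ∈ H.2, G e.1 e.2 else 0) = ∑ k ∈ T, (G i k + G j k) :=
      by have h := hsum _ hstrucChar; convert h using 2 <;> congr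
    constructor
    · show (1 / (Mcoll.edges.card : ℝ)) * _ = _
      rw [hs1, hcard2, if_pos hij, one_mul, Finset.mul_sum]
      push_cast
      exact Finset.sum_congr rfl fun k _ => by ring
    · show (1 / (Mcoll.edges.card : ℝ)) * _ = _
      rw [hs2, hcard2, if_pos hij, one_mul, Finset.mul_sum]
      push_cast
      exact Finset.sum_congr rfl fun k _ => by ring
end
end

section
/- Let G be a weighted directed bipartite graph with source vertices S and destination vertices D, and let M_expa denote the (functional or structural) motif adjacency matrix of the expander motif M_expa in G. Then for all vertices i,j: (M_expa)_{ij} = 1{i ≠ j} · Σ_{k ∈ S with (k,i) ∈ E and (k,j) ∈ E} (1/2)·[W((k,i)) + W((k,j))]. -/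
open scoped Classical BigOperators Matrix

noncomputable section

variable {n m : ℕ}

lemma anchored_ne {M : Motif m} {A : Finset (Fin m)}
    {H : Finset (Fin n) × Finset (Fin n × Fin n)} {i j : Fin n}
    (h : AnchoredPair M A H i j) : i ≠ j := by
  obtain ⟨φ, ⟨hinj, -, -⟩, a, -, b, -, hab, rfl, rfl⟩ := h
  exact fun h => hab (hinj h)

lemma expa_iso {M : Motif 3} (hM : M.edges = {((1 : Fin 3), 0), (1, 2)})
    {k i j : Fin n} (hki : k ≠ i) (hkj : k ≠ j) (hij : i ≠ j) :
    IsIso M ({k, i, j}, {(k, i), (k, j)}) ![i, k, j] := by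
  refine ⟨?_, ?_, ?_⟩
  · intro u v huv
    fin_cases u <;> fin_cases v <;> simp_all <;>
      first | rfl | exact absurd huv (by tauto) | exact absurd huv.symm (by tauto)
  · have : (Finset.univ : Finset (Fin 3)) = {0, 1, 2} := by decide
    rw [this]
    simp only [Finset.image_insert, Finset.image_singleton]
    ext x
    simp [Matrix.cons_val_zero, Matrix.cons_val_one]
    tauto
  · intro u v
    rw [hM]
    fin_cases u <;> fin_cases v <;>
      simp [Prod.ext_iff, hki.symm, hkj.symm, hij, hij.symm, hki, hkj,
        (Ne.symm hki), (Ne.symm hkj)] <;> tauto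

lemma iso_shape {M : Motif 3} (hM : M.edges = {((1 : Fin 3), 0), (1, 2)})
    {H : Finset (Fin n) × Finset (Fin n × Fin n)} (hgp : IsGraphPair H)
    {φ : Fin 3 → Fin n} (hφ : IsIso M H φ) :
    H.1 = {φ 0, φ 1, φ 2} ∧ H.2 = {(φ 1, φ 0), (φ 1, φ 2)} := by
  obtain ⟨hinj, himg, hiff⟩ := hφ
  have h1 : H.1 = {φ 0, φ 1, φ 2} := by
    rw [← himg]
    have : (Finset.univ : Finset (Fin 3)) = {0, 1, 2} := by decide
    rw [this]; simp
  refine ⟨h1, ?_⟩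
  ext e
  constructor
  · intro he
    obtain ⟨h1e, h2e, -⟩ := hgp e he
    rw [h1] at h1e h2e
    simp only [Finset.mem_insert, Finset.mem_singleton] at h1e h2e
    have hu : ∃ u : Fin 3, φ u = e.1 := by
      rcases h1e with h | h | h
      exacts [⟨0, h.symm⟩, ⟨1, h.symm⟩, ⟨2, h.symm⟩]
    have hv : ∃ v : Fin 3, φ v = e.2 := by
      rcases h2e with h | h | h
      exacts [⟨0, h.symm⟩, ⟨1, h.symm⟩, ⟨2, h.symm⟩]
    obtain ⟨u, hu⟩ := hu
    obtain ⟨v, hv⟩ := hv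
    have : (u, v) ∈ M.edges := by
      rw [hiff]; rw [hu, hv]; rwa [← Prod.mk.eta (p := e)] at he
    rw [hM] at this
    simp only [Finset.mem_insert, Finset.mem_singleton, Prod.ext_iff] at this ⊢
    rcases this with ⟨h1', h2'⟩ | ⟨h1', h2'⟩ <;>
      [left; right] <;> subst h1' h2' <;> exact ⟨hu.symm, hv.symm⟩
  · intro he
    simp only [Finset.mem_insert, Finset.mem_singleton] at he
    rcases he with h | h <;> subst h
    · have : ((1 : Fin 3), (0 : Fin 3)) ∈ M.edges := by rw [hM]; simp
      exact (hiff 1 0).1 this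
    · have : ((1 : Fin 3), (2 : Fin 3)) ∈ M.edges := by rw [hM]; simp
      exact (hiff 1 2).1 this

lemma mem_edgeFinset {G : Matrix (Fin n) (Fin n) ℝ} {p : Fin n × Fin n} :
    p ∈ edgeFinset G ↔ p.1 ≠ p.2 ∧ 0 < G p.1 p.2 := by
  simp [edgeFinset]

/-- Characterization of functional instances with anchored pair `(i,j)`. -/
lemma func_iff {G : Matrix (Fin n) (Fin n) ℝ}
    {M : Motif 3} (hM : M.edges = {((1 : Fin 3), 0), (1, 2)})
    {A : Finset (Fin 3)} (hA : A = {0, 2}) {i j : Fin n} (hij : i ≠ j)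
    (H : Finset (Fin n) × Finset (Fin n × Fin n)) :
    (IsFuncInstance M G H ∧ AnchoredPair M A H i j) ↔
      ∃ k, ((k, i) ∈ edgeFinset G ∧ (k, j) ∈ edgeFinset G) ∧
        H = ({k, i, j}, {(k, i), (k, j)}) := by
  constructor
  · rintro ⟨⟨hgp, hsub, -⟩, φ, hφ, a, ha, b, hb, hab, hai, hbj⟩
    obtain ⟨h1, h2⟩ := iso_shape hM hgp hφ
    rw [hA] at ha hb
    simp only [Finset.mem_insert, Finset.mem_singleton] at ha hb
    refine ⟨φ 1, ?_, ?_⟩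
    · constructor
      · apply hsub
        rcases ha with rfl | rfl <;> rw [hai] at h2 <;> rw [h2] <;> simp
      · apply hsub
        rcases hb with rfl | rfl <;> rw [hbj] at h2 <;> rw [h2] <;> simp
    · rcases ha with rfl | rfl <;> rcases hb with rfl | rfl
      · exact absurd rfl hab
      · refine Prod.ext ?_ ?_
        · rw [h1, ← hai, ← hbj]; ext x; simp; tauto
        · rw [h2, ← hai, ← hbj]
      · refine Prod.ext ?_ ?_
        · rw [h1, ← hai, ← hbj]; ext x; simp; tauto
        · rw [h2, ← hai, ← hbj]; ext x; simp; tauto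
      · exact absurd rfl hab
  · rintro ⟨k, ⟨hki, hkj⟩, rfl⟩
    have hki' : k ≠ i := (mem_edgeFinset.1 hki).1
    have hkj' : k ≠ j := (mem_edgeFinset.1 hkj).1
    have hiso := expa_iso hM hki' hkj' hij
    refine ⟨⟨?_, ?_, ![i, k, j], hiso⟩, ![i, k, j], hiso, 0, ?_, 2, ?_, ?_, rfl, rfl⟩
    · intro e he
      simp only [Finset.mem_insert, Finset.mem_singleton] at he
      rcases he with rfl | rfl <;>
        simp [hki', hkj']
    · intro e he
      simp only [Finset.mem_insert, Finset.mem_singleton] at he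
      rcases he with rfl | rfl <;> assumption
    · rw [hA]; simp
    · rw [hA]; simp
    · decide

/-- Characterization of structural instances with anchored pair `(i,j)`. -/
lemma struc_iff {G : Matrix (Fin n) (Fin n) ℝ}
    {S D : Finset (Fin n)} (hdisj : Disjoint S D)
    (hbip : ∀ p ∈ edgeFinset G, p.1 ∈ S ∧ p.2 ∈ D)
    {M : Motif 3} (hM : M.edges = {((1 : Fin 3), 0), (1, 2)})
    {A : Finset (Fin 3)} (hA : A = {0, 2}) {i j : Fin n} (hij : i ≠ j)
    (H : Finset (Fin n) × Finset (Fin n × Fin n)) :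
    (IsStrucInstance M G H ∧ AnchoredPair M A H i j) ↔
      ∃ k, ((k, i) ∈ edgeFinset G ∧ (k, j) ∈ edgeFinset G) ∧
        H = ({k, i, j}, {(k, i), (k, j)}) := by
  constructor
  · rintro ⟨⟨hgp, hind, hφ⟩, hap⟩
    refine (func_iff hM hA hij H).1 ⟨⟨hgp, ?_, hφ⟩, hap⟩
    rw [hind]; exact Finset.filter_subset _ _
  · rintro ⟨k, ⟨hki, hkj⟩, rfl⟩
    obtain ⟨⟨hgp, hsub, hφ⟩, hap⟩ :=
      (func_iff hM hA hij (({k, i, j}, {(k, i), (k, j)}))).2 ⟨k, ⟨hki, hkj⟩, rfl⟩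
    refine ⟨⟨hgp, ?_, hφ⟩, hap⟩
    have hkS : k ∈ S := (hbip _ hki).1
    have hiD : i ∈ D := (hbip _ hki).2
    have hjD : j ∈ D := (hbip _ hkj).2
    ext e
    simp only [Finset.mem_filter, Finset.mem_insert, Finset.mem_singleton]
    constructor
    · rintro (rfl | rfl)
      · exact ⟨hki, by simp⟩
      · exact ⟨hkj, by simp⟩
    · rintro ⟨heE, h1, h2⟩
      have he1S : e.1 ∈ S := (hbip _ heE).1
      have he2D : e.2 ∈ D := (hbip _ heE).2
      have he1 : e.1 = k := by
        rcases h1 with h | h | h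
        · exact h
        · exact absurd (h ▸ he1S) (Finset.disjoint_right.1 hdisj hiD)
        · exact absurd (h ▸ he1S) (Finset.disjoint_right.1 hdisj hjD)
      have he2 : e.2 = i ∨ e.2 = j := by
        rcases h2 with h | h | h
        · exact absurd (h ▸ he2D) (Finset.disjoint_left.1 hdisj hkS)
        · exact Or.inl h
        · exact Or.inr h
      rcases he2 with h | h
      · left; exact Prod.ext he1 h
      · right; exact Prod.ext he1 h

/-- **Expanders in bipartite graphs.** -/
theorem expander_mam_bipartite
    (G : Matrix (Fin n) (Fin n) ℝ)
    (hpos : ∀ i j, 0 ≤ G i j) (hdiag : ∀ i, G i i = 0)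
    (S D : Finset (Fin n)) (hdisj : Disjoint S D) (hcover : S ∪ D = Finset.univ)
    (hbip : ∀ p ∈ edgeFinset G, p.1 ∈ S ∧ p.2 ∈ D)
    (Mexpa : Motif 3) (hM : Mexpa.edges = {((1 : Fin 3), 0), (1, 2)})
    (A : Finset (Fin 3)) (hA : A = {0, 2}) (i j : Fin n) :
    mamFunc Mexpa A G i j =
      (if i ≠ j then (1 : ℝ) else 0) *
        ∑ k ∈ S.filter (fun k => (k, i) ∈ edgeFinset G ∧ (k, j) ∈ edgeFinset G),
          (1 / 2) * (G k i + G k j) ∧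
    mamStruc Mexpa A G i j =
      (if i ≠ j then (1 : ℝ) else 0) *
        ∑ k ∈ S.filter (fun k => (k, i) ∈ edgeFinset G ∧ (k, j) ∈ edgeFinset G),
          (1 / 2) * (G k i + G k j) := by
  have hcard : (Mexpa.edges.card : ℝ) = 2 := by
    have h2 : ({((1 : Fin 3), 0), (1, 2)} : Finset (Fin 3 × Fin 3)).card = 2 := by decide
    rw [hM, h2]; norm_num
  by_cases hij : i = j
  · subst hij
    have hz : ∀ (P : (Finset (Fin n) × Finset (Fin n × Fin n)) → Prop),
        (∑ H : Finset (Fin n) × Finset (Fin n × Fin n),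
          if P H ∧ AnchoredPair Mexpa A H i i then ∑ e ∈ H.2, G e.1 e.2 else 0) = 0 := by
      intro P
      apply Finset.sum_eq_zero
      intro H _
      exact if_neg (fun h => anchored_ne h.2 rfl)
    constructor
    · simp only [mamFunc, hz, mul_zero, ne_eq, not_true_eq_false, if_false, zero_mul]
    · simp only [mamStruc, hz, mul_zero, ne_eq, not_true_eq_false, if_false, zero_mul]
  · have mainsum : ∀ (Q : (Finset (Fin n) × Finset (Fin n × Fin n)) → Prop),
        (∀ H, (Q H ∧ AnchoredPair Mexpa A H i j) ↔
          ∃ k, ((k, i) ∈ edgeFinset G ∧ (k, j) ∈ edgeFinset G) ∧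
          H = ({k, i, j}, {(k, i), (k, j)})) →
        (∑ H : Finset (Fin n) × Finset (Fin n × Fin n),
            if Q H ∧ AnchoredPair Mexpa A H i j then ∑ e ∈ H.2, G e.1 e.2 else 0) =
          ∑ k ∈ S.filter (fun k => (k, i) ∈ edgeFinset G ∧ (k, j) ∈ edgeFinset G),
            (G k i + G k j) := by
      intro Q hQ
      rw [← Finset.sum_filter]
      have himg : Finset.univ.filter (fun H => Q H ∧ AnchoredPair Mexpa A H i j) =
          (S.filter (fun k => (k, i) ∈ edgeFinset G ∧ (k, j) ∈ edgeFinset G)).image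
            (fun k => ((({k, i, j}, {(k, i), (k, j)}) :
              Finset (Fin n) × Finset (Fin n × Fin n)))) := by
        ext H
        simp only [Finset.mem_filter, Finset.mem_univ, true_and, Finset.mem_image]
        rw [hQ H]
        constructor
        · rintro ⟨k, ⟨hki, hkj⟩, rfl⟩
          exact ⟨k, ⟨(hbip _ hki).1, hki, hkj⟩, rfl⟩
        · rintro ⟨k, hk, rfl⟩
          exact ⟨k, hk.2, rfl⟩
      have hinj : ∀ k ∈ S.filter (fun k => (k, i) ∈ edgeFinset G ∧ (k, j) ∈ edgeFinset G),
          ∀ k' ∈ S.filter (fun k => (k, i) ∈ edgeFinset G ∧ (k, j) ∈ edgeFinset G),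
          ((({k, i, j}, {(k, i), (k, j)}) : Finset (Fin n) × Finset (Fin n × Fin n))) =
            (({k', i, j}, {(k', i), (k', j)})) → k = k' := by
        intro k _ k' _ h
        have h2 := congrArg Prod.snd h
        simp only at h2
        have hm : ((k, i) : Fin n × Fin n) ∈ ({(k', i), (k', j)} : Finset (Fin n × Fin n)) := by
          rw [← h2]; simp
        simp only [Finset.mem_insert, Finset.mem_singleton, Prod.ext_iff] at hm
        tauto
      rw [himg, Finset.sum_image hinj]
      apply Finset.sum_congr rfl
      intro k _
      exact Finset.sum_pair (by simp [Prod.ext_iff, hij])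
    have hfs : (∑ H : Finset (Fin n) × Finset (Fin n × Fin n),
        if IsFuncInstance Mexpa G H ∧ AnchoredPair Mexpa A H i j
          then ∑ e ∈ H.2, G e.1 e.2 else 0) =
        ∑ k ∈ S.filter (fun k => (k, i) ∈ edgeFinset G ∧ (k, j) ∈ edgeFinset G),
          (G k i + G k j) := by
      exact mainsum (fun H => IsFuncInstance Mexpa G H) (fun H => func_iff hM hA hij H)
    have hss : (∑ H : Finset (Fin n) × Finset (Fin n × Fin n),
        if IsStrucInstance Mexpa G H ∧ AnchoredPair Mexpa A H i j
          then ∑ e ∈ H.2, G e.1 e.2 else 0) =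
        ∑ k ∈ S.filter (fun k => (k, i) ∈ edgeFinset G ∧ (k, j) ∈ edgeFinset G),
          (G k i + G k j) := by
      exact mainsum (fun H => IsStrucInstance Mexpa G H)
        (fun H => struc_iff hdisj hbip hM hA hij H)
    constructor
    · simp only [mamFunc]
      rw [hfs, hcard, if_pos hij, one_mul, Finset.mul_sum]
    · simp only [mamStruc]
      rw [hss, hcard, if_pos hij, one_mul, Finset.mul_sum]
end
end

section
/- Let G be a weighted directed bipartite graph with source vertices S and destination vertices D. Then every functional instance of the collider motif M_coll in G is a structural instance, and likewise for the expander motif M_expa; consequently the functional and structural motif adjacency matrices coincide: M^func_coll = M^struc_coll and M^func_expa = M^struc_expa. -/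
open scoped Classical BigOperators Matrix

noncomputable section

variable {n m : ℕ}

lemma coll_func_to_struc {n : ℕ} (G : Matrix (Fin n) (Fin n) ℝ)
    (S D : Finset (Fin n)) (hdisj : Disjoint S D)
    (hbip : ∀ p ∈ edgeFinset G, p.1 ∈ S ∧ p.2 ∈ D)
    (M : Motif 3) (hM : M.edges = {((0 : Fin 3), 1), (2, 1)})
    (H : Finset (Fin n) × Finset (Fin n × Fin n))
    (hF : IsFuncInstance M G H) : IsStrucInstance M G H := by
  obtain ⟨hGP, hsub, φ, hinj, himg, hedge⟩ := hF
  refine ⟨hGP, ?_, φ, hinj, himg, hedge⟩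
  have h01 : (φ 0, φ 1) ∈ H.2 := (hedge 0 1).1 (by simp [hM])
  have h21 : (φ 2, φ 1) ∈ H.2 := (hedge 2 1).1 (by simp [hM])
  have hS0 : φ 0 ∈ S := (hbip _ (hsub h01)).1
  have hS2 : φ 2 ∈ S := (hbip _ (hsub h21)).1
  have hD1 : φ 1 ∈ D := (hbip _ (hsub h01)).2
  ext e
  simp only [Finset.mem_filter]
  constructor
  · intro he; exact ⟨hsub he, (hGP e he).1, (hGP e he).2.1⟩
  · rcases e with ⟨x, y⟩
    rintro ⟨heG, h1, h2⟩
    rw [← himg] at h1 h2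
    obtain ⟨u, -, hu⟩ := Finset.mem_image.1 h1
    obtain ⟨v, -, hv⟩ := Finset.mem_image.1 h2
    have hbe := hbip _ heG
    subst hu; subst hv
    have hv1 : v = 1 := by
      fin_cases v
      · exact absurd hbe.2 (Finset.disjoint_left.1 hdisj hS0)
      · rfl
      · exact absurd hbe.2 (Finset.disjoint_left.1 hdisj hS2)
    subst hv1
    have hu02 : u = 0 ∨ u = 2 := by
      fin_cases u
      · exact Or.inl rfl
      · exact absurd hbe.1 (Finset.disjoint_right.1 hdisj hD1)
      · exact Or.inr rfl
    rcases hu02 with h | h <;> subst h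
    · exact (hedge 0 1).1 (by simp [hM])
    · exact (hedge 2 1).1 (by simp [hM])

lemma expa_func_to_struc {n : ℕ} (G : Matrix (Fin n) (Fin n) ℝ)
    (S D : Finset (Fin n)) (hdisj : Disjoint S D)
    (hbip : ∀ p ∈ edgeFinset G, p.1 ∈ S ∧ p.2 ∈ D)
    (M : Motif 3) (hM : M.edges = {((1 : Fin 3), 0), (1, 2)})
    (H : Finset (Fin n) × Finset (Fin n × Fin n))
    (hF : IsFuncInstance M G H) : IsStrucInstance M G H := by
  obtain ⟨hGP, hsub, φ, hinj, himg, hedge⟩ := hF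
  refine ⟨hGP, ?_, φ, hinj, himg, hedge⟩
  have h10 : (φ 1, φ 0) ∈ H.2 := (hedge 1 0).1 (by simp [hM])
  have h12 : (φ 1, φ 2) ∈ H.2 := (hedge 1 2).1 (by simp [hM])
  have hD0 : φ 0 ∈ D := (hbip _ (hsub h10)).2
  have hD2 : φ 2 ∈ D := (hbip _ (hsub h12)).2
  have hS1 : φ 1 ∈ S := (hbip _ (hsub h10)).1
  ext e
  simp only [Finset.mem_filter]
  constructor
  · intro he; exact ⟨hsub he, (hGP e he).1, (hGP e he).2.1⟩
  · rcases e with ⟨x, y⟩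
    rintro ⟨heG, h1, h2⟩
    rw [← himg] at h1 h2
    obtain ⟨u, -, hu⟩ := Finset.mem_image.1 h1
    obtain ⟨v, -, hv⟩ := Finset.mem_image.1 h2
    have hbe := hbip _ heG
    subst hu; subst hv
    have hu1 : u = 1 := by
      fin_cases u
      · exact absurd hbe.1 (Finset.disjoint_right.1 hdisj hD0)
      · rfl
      · exact absurd hbe.1 (Finset.disjoint_right.1 hdisj hD2)
    subst hu1
    have hv02 : v = 0 ∨ v = 2 := by
      fin_cases v
      · exact Or.inl rfl
      · exact absurd hbe.2 (Finset.disjoint_left.1 hdisj hS1)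
      · exact Or.inr rfl
    rcases hv02 with h | h <;> subst h
    · exact (hedge 1 0).1 (by simp [hM])
    · exact (hedge 1 2).1 (by simp [hM])

lemma struc_to_func {n m : ℕ} (M : Motif m) (G : Matrix (Fin n) (Fin n) ℝ)
    (H : Finset (Fin n) × Finset (Fin n × Fin n))
    (hS : IsStrucInstance M G H) : IsFuncInstance M G H :=
  ⟨hS.1, hS.2.1 ▸ Finset.filter_subset _ _, hS.2.2⟩

lemma mam_eq_of_iff {n m : ℕ} (M : Motif m) (A : Finset (Fin m))
    (G : Matrix (Fin n) (Fin n) ℝ)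
    (key : ∀ H, IsFuncInstance M G H → IsStrucInstance M G H) :
    mamFunc M A G = mamStruc M A G := by
  funext i j
  unfold mamFunc mamStruc
  congr 1
  refine Finset.sum_congr rfl fun H _ => ?_
  have : (IsFuncInstance M G H ∧ AnchoredPair M A H i j) =
      (IsStrucInstance M G H ∧ AnchoredPair M A H i j) :=
    propext (and_congr_left' ⟨key H, struc_to_func M G H⟩)
  simp only [this]

/-- **In bipartite graphs, all collider/expander instances are structural, and the
functional and structural MAMs coincide.** -/
theorem bipartite_func_eq_struc
    (G : Matrix (Fin n) (Fin n) ℝ)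
    (hpos : ∀ i j, 0 ≤ G i j) (hdiag : ∀ i, G i i = 0)
    (S D : Finset (Fin n)) (hdisj : Disjoint S D) (hcover : S ∪ D = Finset.univ)
    (hbip : ∀ p ∈ edgeFinset G, p.1 ∈ S ∧ p.2 ∈ D)
    (Mcoll : Motif 3) (hMc : Mcoll.edges = {((0 : Fin 3), 1), (2, 1)})
    (Mexpa : Motif 3) (hMe : Mexpa.edges = {((1 : Fin 3), 0), (1, 2)})
    (A : Finset (Fin 3)) (hA : A = {0, 2}) :
    (∀ H : Finset (Fin n) × Finset (Fin n × Fin n),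
      IsFuncInstance Mcoll G H → IsStrucInstance Mcoll G H) ∧
    (∀ H : Finset (Fin n) × Finset (Fin n × Fin n),
      IsFuncInstance Mexpa G H → IsStrucInstance Mexpa G H) ∧
    mamFunc Mcoll A G = mamStruc Mcoll A G ∧
    mamFunc Mexpa A G = mamStruc Mexpa A G := by
  refine ⟨fun H => coll_func_to_struc G S D hdisj hbip Mcoll hMc H,
    fun H => expa_func_to_struc G S D hdisj hbip Mexpa hMe H,
    mam_eq_of_iff _ _ _ (fun H => coll_func_to_struc G S D hdisj hbip Mcoll hMc H),
    mam_eq_of_iff _ _ _ (fun H => expa_func_to_struc G S D hdisj hbip Mexpa hMe H)⟩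
end
end

section
/- Let G be a weighted directed graph on vertex set V = {1,…,n} and let M_4 be the simple bi-directional triangle motif with vertices {1,2,3} and edge set E_M = {(1,2),(2,1),(2,3),(3,2),(1,3),(3,1)}. Then the functional (equivalently, structural) motif adjacency matrix of M_4 in G satisfies M = (1/6)·[ J_d ∘ (J_d G_d) + J_d ∘ (G_d J_d) + G_d ∘ (J_d J_d) ]. -/
open scoped Classical BigOperators Matrix

noncomputable section

variable {n m : ℕ}

namespace MamM4Aux

lemma mem_edge_ne {G : Matrix (Fin n) (Fin n) ℝ} {i j : Fin n}
    (h : (i, j) ∈ edgeFinset G) : i ≠ j := by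
  simp only [edgeFinset, Finset.mem_filter] at h
  exact h.2.1

lemma mem_edge_ne' {G : Matrix (Fin n) (Fin n) ℝ} {e : Fin n × Fin n}
    (h : e ∈ edgeFinset G) : e.1 ≠ e.2 := by
  simp only [edgeFinset, Finset.mem_filter] at h
  exact h.2.1

def Tset (i j k : Fin n) : Finset (Fin n × Fin n) :=
  {(i, j), (j, i), (i, k), (k, i), (j, k), (k, j)}

lemma mem_Tset {i j k x y : Fin n} :
    (x, y) ∈ Tset i j k ↔ (x = i ∧ y = j) ∨ (x = j ∧ y = i) ∨ (x = i ∧ y = k) ∨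
      (x = k ∧ y = i) ∨ (x = j ∧ y = k) ∨ (x = k ∧ y = j) := by
  simp [Tset, Prod.ext_iff]

lemma edges_iff (M4 : Motif 3)
    (hM : M4.edges = {((0 : Fin 3), 1), (1, 0), (1, 2), (2, 1), (0, 2), (2, 0)}) :
    ∀ u v : Fin 3, (u, v) ∈ M4.edges ↔ u ≠ v := by
  intro u v; rw [hM]; revert u v; decide

lemma card_edges (M4 : Motif 3)
    (hM : M4.edges = {((0 : Fin 3), 1), (1, 0), (1, 2), (2, 1), (0, 2), (2, 0)}) :
    M4.edges.card = 6 := by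
  rw [hM]; decide

lemma func_iff_struc (M4 : Motif 3)
    (hM : M4.edges = {((0 : Fin 3), 1), (1, 0), (1, 2), (2, 1), (0, 2), (2, 0)})
    (G : Matrix (Fin n) (Fin n) ℝ) (H : Finset (Fin n) × Finset (Fin n × Fin n)) :
    IsFuncInstance M4 G H ↔ IsStrucInstance M4 G H := by
  constructor
  · rintro ⟨hGP, hE, φ, hφ⟩
    refine ⟨hGP, ?_, φ, hφ⟩
    obtain ⟨hinj, himg, hedge⟩ := hφ
    ext e
    simp only [Finset.mem_filter]
    constructor
    · intro he
      exact ⟨hE he, (hGP e he).1, (hGP e he).2.1⟩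
    · rintro ⟨heE, h1, h2⟩
      rw [← himg] at h1 h2
      simp only [Finset.mem_image, Finset.mem_univ, true_and] at h1 h2
      obtain ⟨u, hu⟩ := h1
      obtain ⟨v, hv⟩ := h2
      have huv : u ≠ v := by
        rintro rfl
        exact mem_edge_ne' heE (by rw [← hu, ← hv])
      have h3 : (φ u, φ v) ∈ H.2 := (hedge u v).1 ((edges_iff M4 hM u v).2 huv)
      rw [hu, hv] at h3
      exact h3
  · rintro ⟨hGP, hfilt, hφ⟩
    exact ⟨hGP, by rw [hfilt]; exact Finset.filter_subset _ _, hφ⟩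

lemma func_char (M4 : Motif 3)
    (hM : M4.edges = {((0 : Fin 3), 1), (1, 0), (1, 2), (2, 1), (0, 2), (2, 0)})
    (G : Matrix (Fin n) (Fin n) ℝ) (H : Finset (Fin n) × Finset (Fin n × Fin n))
    (i j : Fin n) :
    (IsFuncInstance M4 G H ∧ AnchoredPair M4 Finset.univ H i j) ↔
    ∃ k, (i ≠ j ∧ i ≠ k ∧ j ≠ k ∧ Tset i j k ⊆ edgeFinset G) ∧
      H = (({i, j, k} : Finset (Fin n)), Tset i j k) := by
  constructor
  · rintro ⟨⟨hGP, hE, -⟩, φ, ⟨hinj, himg, hedge⟩, a, -, b, -, hab, rfl, rfl⟩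
    obtain ⟨c, hca, hcb, hcover⟩ :=
      (by decide : ∀ a b : Fin 3, a ≠ b →
        ∃ c, c ≠ a ∧ c ≠ b ∧ ∀ u : Fin 3, u = a ∨ u = b ∨ u = c) a b hab
    have hV : H.1 = {φ a, φ b, φ c} := by
      rw [← himg]
      ext x
      simp only [Finset.mem_image, Finset.mem_univ, true_and, Finset.mem_insert,
        Finset.mem_singleton]
      constructor
      · rintro ⟨u, rfl⟩
        rcases hcover u with rfl | rfl | rfl <;> tauto
      · rintro (rfl | rfl | rfl) <;> exact ⟨_, rfl⟩
    have hT : H.2 = Tset (φ a) (φ b) (φ c) := by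
      ext e
      constructor
      · intro he
        obtain ⟨h1, h2, h3⟩ := hGP e he
        rw [hV] at h1 h2
        obtain ⟨x, y⟩ := e
        simp only [Finset.mem_insert, Finset.mem_singleton] at h1 h2
        rcases h1 with rfl | rfl | rfl <;> rcases h2 with rfl | rfl | rfl <;>
          simp_all [mem_Tset]
      · intro he
        obtain ⟨x, y⟩ := e
        rw [mem_Tset] at he
        have key : ∀ u v : Fin 3, u ≠ v → (φ u, φ v) ∈ H.2 := fun u v huv =>
          (hedge u v).1 ((edges_iff M4 hM u v).2 huv)
        rcases he with ⟨rfl, rfl⟩ | ⟨rfl, rfl⟩ | ⟨rfl, rfl⟩ | ⟨rfl, rfl⟩ |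
          ⟨rfl, rfl⟩ | ⟨rfl, rfl⟩
        · exact key a b hab
        · exact key b a hab.symm
        · exact key a c hca.symm
        · exact key c a hca
        · exact key b c hcb.symm
        · exact key c b hcb
    refine ⟨φ c, ⟨hinj.ne hab, hinj.ne hca.symm, hinj.ne hcb.symm, ?_⟩, ?_⟩
    · rw [← hT]; exact hE
    · exact Prod.ext hV hT
  · rintro ⟨k, ⟨hij, hik, hjk, hsub⟩, rfl⟩
    have hii : ∀ u v : Fin 3, ((![i, j, k]) u, (![i, j, k]) v) ∈ Tset i j k ↔ u ≠ v := by
      intro u v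
      fin_cases u <;> fin_cases v <;>
        simp [mem_Tset, hij, hik, hjk, hij.symm, hik.symm, hjk.symm]
    have hiso : IsIso M4 (({i, j, k} : Finset (Fin n)), Tset i j k) ![i, j, k] := by
      refine ⟨?_, ?_, ?_⟩
      · intro u v huv
        fin_cases u <;> fin_cases v <;> simp_all
      · show Finset.image ![i, j, k] Finset.univ = {i, j, k}
        rw [show (Finset.univ : Finset (Fin 3)) = {0, 1, 2} from by decide]
        simp
      · intro u v
        rw [edges_iff M4 hM, hii u v]
    have hGP : IsGraphPair (({i, j, k} : Finset (Fin n)), Tset i j k) := by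
      rintro ⟨x, y⟩ he
      rw [mem_Tset] at he
      rcases he with ⟨rfl, rfl⟩ | ⟨rfl, rfl⟩ | ⟨rfl, rfl⟩ | ⟨rfl, rfl⟩ |
        ⟨rfl, rfl⟩ | ⟨rfl, rfl⟩ <;>
        simp_all [hij.symm, hik.symm, hjk.symm]
    exact ⟨⟨hGP, hsub, ![i, j, k], hiso⟩, ![i, j, k], hiso, 0, Finset.mem_univ _,
      1, Finset.mem_univ _, by decide, rfl, rfl⟩

lemma sum_char (M4 : Motif 3)
    (hM : M4.edges = {((0 : Fin 3), 1), (1, 0), (1, 2), (2, 1), (0, 2), (2, 0)})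
    (G : Matrix (Fin n) (Fin n) ℝ) (i j : Fin n) :
    (∑ H : Finset (Fin n) × Finset (Fin n × Fin n),
      if IsFuncInstance M4 G H ∧ AnchoredPair M4 Finset.univ H i j then
        ∑ e ∈ H.2, G e.1 e.2 else 0)
    = ∑ k : Fin n, if i ≠ j ∧ i ≠ k ∧ j ≠ k ∧ Tset i j k ⊆ edgeFinset G then
        G i j + G j i + G i k + G k i + G j k + G k j else 0 := by
  rw [← Finset.sum_filter, ← Finset.sum_filter]
  refine (Finset.sum_bij
    (fun k _ => (({i, j, k} : Finset (Fin n)), Tset i j k)) ?_ ?_ ?_ ?_).symm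
  · intro k hk
    simp only [Finset.mem_filter, Finset.mem_univ, true_and] at hk ⊢
    exact (func_char M4 hM G _ i j).2 ⟨k, hk, rfl⟩
  · intro k1 h1 k2 h2 heq
    simp only [Finset.mem_filter, Finset.mem_univ, true_and] at h1
    have h1' : {i, j, k1} = ({i, j, k2} : Finset (Fin n)) := congrArg Prod.fst heq
    have hmem : k1 ∈ ({i, j, k2} : Finset (Fin n)) := h1' ▸ (by simp)
    simp only [Finset.mem_insert, Finset.mem_singleton] at hmem
    rcases hmem with rfl | rfl | rfl
    · exact absurd rfl h1.2.1
    · exact absurd rfl h1.2.2.1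
    · rfl
  · intro H hH
    simp only [Finset.mem_filter, Finset.mem_univ, true_and] at hH
    obtain ⟨k, hk, rfl⟩ := (func_char M4 hM G H i j).1 hH
    exact ⟨k, by simp [Finset.mem_filter, hk], rfl⟩
  · intro k hk
    simp only [Finset.mem_filter, Finset.mem_univ, true_and] at hk
    obtain ⟨hij, hik, hjk, -⟩ := hk
    show G i j + G j i + G i k + G k i + G j k + G k j = ∑ e ∈ Tset i j k, G e.1 e.2
    simp only [Tset]
    rw [Finset.sum_insert (by simp [Prod.ext_iff]; tauto),
      Finset.sum_insert (by simp [Prod.ext_iff]; tauto),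
      Finset.sum_insert (by simp [Prod.ext_iff]; tauto),
      Finset.sum_insert (by simp [Prod.ext_iff]; tauto),
      Finset.sum_insert (by simp [Prod.ext_iff]; tauto),
      Finset.sum_singleton]
    ring

end MamM4Aux

open MamM4Aux in
/-- **MAM formula for the bi-directional triangle motif `M₄`.** -/
theorem mam_M4
    (G : Matrix (Fin n) (Fin n) ℝ)
    (hpos : ∀ i j, 0 ≤ G i j) (hdiag : ∀ i, G i i = 0)
    (M4 : Motif 3)
    (hM : M4.edges = {((0 : Fin 3), 1), (1, 0), (1, 2), (2, 1), (0, 2), (2, 0)}) :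
    mamFunc M4 Finset.univ G =
      (1 / 6 : ℝ) •
        (had (Jdmat G) (Jdmat G * Gdmat G) + had (Jdmat G) (Gdmat G * Jdmat G) +
          had (Gdmat G) (Jdmat G * Jdmat G)) ∧
    mamStruc M4 Finset.univ G =
      (1 / 6 : ℝ) •
        (had (Jdmat G) (Jdmat G * Gdmat G) + had (Jdmat G) (Gdmat G * Jdmat G) +
          had (Gdmat G) (Jdmat G * Jdmat G)) := by
  have hcard : (M4.edges.card : ℝ) = 6 := by rw [card_edges M4 hM]; norm_num
  have hfunc : mamFunc M4 Finset.univ G =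
      (1 / 6 : ℝ) •
        (had (Jdmat G) (Jdmat G * Gdmat G) + had (Jdmat G) (Gdmat G * Jdmat G) +
          had (Gdmat G) (Jdmat G * Jdmat G)) := by
    funext i j
    simp only [mamFunc, hcard, Matrix.smul_apply, Matrix.add_apply, had,
      Matrix.mul_apply, smul_eq_mul]
    rw [sum_char M4 hM G i j]
    congr 1
    rw [Finset.mul_sum, Finset.mul_sum, Finset.mul_sum, ← Finset.sum_add_distrib,
      ← Finset.sum_add_distrib]
    refine Finset.sum_congr rfl fun k _ => ?_
    by_cases hA : (i, j) ∈ edgeFinset G ∧ (j, i) ∈ edgeFinset G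
    · by_cases hB : (i, k) ∈ edgeFinset G ∧ (k, i) ∈ edgeFinset G
      · by_cases hC : (k, j) ∈ edgeFinset G ∧ (j, k) ∈ edgeFinset G
        · have hij' : i ≠ j := mem_edge_ne hA.1
          have hik' : i ≠ k := mem_edge_ne hB.1
          have hjk' : j ≠ k := (mem_edge_ne hC.1).symm
          have hsub : Tset i j k ⊆ edgeFinset G := by
            simp [Tset, Finset.insert_subset_iff, hA.1, hA.2, hB.1, hB.2, hC.1, hC.2]
          rw [if_pos ⟨hij', hik', hjk', hsub⟩]
          simp only [Jdmat, Gdmat, hA.1, hA.2, hB.1, hB.2, hC.1, hC.2, and_self,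
            if_true, true_and, and_true, if_pos]
          ring
        · rw [if_neg (fun h => hC ⟨h.2.2.2 (by simp [Tset]), h.2.2.2 (by simp [Tset])⟩)]
          simp [Jdmat, Gdmat, hC]
      · rw [if_neg (fun h => hB ⟨h.2.2.2 (by simp [Tset]), h.2.2.2 (by simp [Tset])⟩)]
        simp [Jdmat, Gdmat, hB]
    · rw [if_neg (fun h => hA ⟨h.2.2.2 (by simp [Tset]), h.2.2.2 (by simp [Tset])⟩)]
      simp [Jdmat, Gdmat, hA]
  have hstruc : mamStruc M4 Finset.univ G = mamFunc M4 Finset.univ G := by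
    funext i j
    simp only [mamStruc, mamFunc]
    refine congrArg _ (Finset.sum_congr rfl fun H _ => ?_)
    exact if_congr (and_congr_left' (func_iff_struc M4 hM G H).symm) rfl rfl
  exact ⟨hfunc, hstruc.trans hfunc⟩
end
end

section
/- Let G be a weighted directed graph on vertex set V = {1,…,n} and let M_9 be the simple 2-path motif with vertices {1,2,3} and edge set E_M = {(1,2),(2,3)}. Then the functional motif adjacency matrix of M_9 in G satisfies M^func = (1/2)·(C + Cᵀ), where C = J ∘ (J_n Gᵀ) + G ∘ (J_n Jᵀ) + J_n ∘ (J G) + J_n ∘ (G J) + J ∘ (Gᵀ J_n) + G ∘ (Jᵀ J_n). -/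
open scoped Classical BigOperators Matrix

noncomputable section

variable {n m : ℕ}

section M9Aux

variable {n : ℕ}

private lemma mem_edge {G : Matrix (Fin n) (Fin n) ℝ} {x y : Fin n} :
    (x, y) ∈ edgeFinset G ↔ x ≠ y ∧ 0 < G x y := by
  simp [edgeFinset]

private lemma G_zero {G : Matrix (Fin n) (Fin n) ℝ} (hpos : ∀ i j, 0 ≤ G i j)
    (hdiag : ∀ i, G i i = 0) {x y : Fin n} (h : (x, y) ∉ edgeFinset G) : G x y = 0 := by
  by_cases hxy : x = y
  · subst hxy; exact hdiag x
  · rw [mem_edge, not_and_or] at h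
    rcases h with h | h
    · exact absurd hxy (not_not.mp (by simpa using h))
    · exact le_antisymm (not_lt.mp h) (hpos x y)

/-- The predicate on triples parametrizing functional instances of the 2-path motif. -/
private def Qtrip (G : Matrix (Fin n) (Fin n) ℝ) (a b c : Fin n) : Prop :=
  a ≠ b ∧ b ≠ c ∧ a ≠ c ∧ (a, b) ∈ edgeFinset G ∧ (b, c) ∈ edgeFinset G

private def tripToH (a b c : Fin n) : Finset (Fin n) × Finset (Fin n × Fin n) :=
  (({a, b, c} : Finset (Fin n)), ({(a, b), (b, c)} : Finset (Fin n × Fin n)))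

private lemma iso_char (M9 : Motif 3) (hM : M9.edges = {((0 : Fin 3), 1), (1, 2)})
    {a b c : Fin n} (hab : a ≠ b) (hbc : b ≠ c) (hac : a ≠ c) (φ : Fin 3 → Fin n) :
    IsIso M9 (tripToH a b c) φ ↔ φ 0 = a ∧ φ 1 = b ∧ φ 2 = c := by
  constructor
  · rintro ⟨hinj, himg, hedge⟩
    have h01 : ((φ 0, φ 1) : Fin n × Fin n) ∈ ({(a, b), (b, c)} : Finset (Fin n × Fin n)) :=
      (hedge 0 1).mp (by simp [hM])
    have h12 : ((φ 1, φ 2) : Fin n × Fin n) ∈ ({(a, b), (b, c)} : Finset (Fin n × Fin n)) :=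
      (hedge 1 2).mp (by simp [hM])
    simp only [Finset.mem_insert, Finset.mem_singleton, Prod.mk.injEq] at h01 h12
    rcases h01 with ⟨h0, h1⟩ | ⟨h0, h1⟩ <;> rcases h12 with ⟨h1', h2⟩ | ⟨h1', h2⟩
    · exact absurd (h1.symm.trans h1') (Ne.symm hab)
    · exact ⟨h0, h1, h2⟩
    · exact absurd (h1'.symm.trans h1) hac
    · exact absurd (h1'.symm.trans h1) hbc
  · rintro ⟨h0, h1, h2⟩
    refine ⟨?_, ?_, ?_⟩
    · intro u v huv
      fin_cases u <;> fin_cases v <;> simp_all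
    · ext x
      simp only [Finset.mem_image, Finset.mem_univ, true_and, tripToH, Finset.mem_insert,
        Finset.mem_singleton]
      constructor
      · rintro ⟨u, rfl⟩
        fin_cases u <;> simp [h0, h1, h2]
      · rintro (rfl | rfl | rfl)
        exacts [⟨0, h0⟩, ⟨1, h1⟩, ⟨2, h2⟩]
    · intro u v
      fin_cases u <;> fin_cases v <;>
        simp_all [hM, tripToH, Prod.ext_iff, hab, hbc, hac, hab.symm, hbc.symm, hac.symm,
          Ne.symm hab, Ne.symm hbc, Ne.symm hac]

private lemma inst_char (M9 : Motif 3) (hM : M9.edges = {((0 : Fin 3), 1), (1, 2)})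
    (G : Matrix (Fin n) (Fin n) ℝ) (H : Finset (Fin n) × Finset (Fin n × Fin n)) :
    IsFuncInstance M9 G H ↔ ∃ a b c, Qtrip G a b c ∧ H = tripToH a b c := by
  constructor
  · rintro ⟨hgp, hsub, φ, hinj, himg, hedge⟩
    have e01 : ((φ 0, φ 1) : Fin n × Fin n) ∈ H.2 := (hedge 0 1).mp (by simp [hM])
    have e12 : ((φ 1, φ 2) : Fin n × Fin n) ∈ H.2 := (hedge 1 2).mp (by simp [hM])
    have hab : φ 0 ≠ φ 1 := fun h => by simpa using hinj h
    have hbc : φ 1 ≠ φ 2 := fun h => by simpa using hinj h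
    have hac : φ 0 ≠ φ 2 := fun h => by simpa using hinj h
    refine ⟨φ 0, φ 1, φ 2, ⟨hab, hbc, hac, hsub e01, hsub e12⟩, ?_⟩
    have h1 : H.1 = ({φ 0, φ 1, φ 2} : Finset (Fin n)) := by
      rw [← himg]
      ext x
      simp only [Finset.mem_image, Finset.mem_univ, true_and, Finset.mem_insert,
        Finset.mem_singleton]
      constructor
      · rintro ⟨u, rfl⟩
        fin_cases u <;> simp
      · rintro (rfl | rfl | rfl)
        exacts [⟨0, rfl⟩, ⟨1, rfl⟩, ⟨2, rfl⟩]
    have h2 : H.2 = ({(φ 0, φ 1), (φ 1, φ 2)} : Finset (Fin n × Fin n)) := by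
      apply Finset.Subset.antisymm
      · intro e he
        obtain ⟨hx, hy, -⟩ := hgp e he
        rw [h1] at hx hy
        simp only [Finset.mem_insert, Finset.mem_singleton] at hx hy
        have : ∃ u v : Fin 3, φ u = e.1 ∧ φ v = e.2 := by
          rcases hx with hx | hx | hx <;> rcases hy with hy | hy | hy
          · exact ⟨0, 0, hx.symm, hy.symm⟩
          · exact ⟨0, 1, hx.symm, hy.symm⟩
          · exact ⟨0, 2, hx.symm, hy.symm⟩
          · exact ⟨1, 0, hx.symm, hy.symm⟩
          · exact ⟨1, 1, hx.symm, hy.symm⟩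
          · exact ⟨1, 2, hx.symm, hy.symm⟩
          · exact ⟨2, 0, hx.symm, hy.symm⟩
          · exact ⟨2, 1, hx.symm, hy.symm⟩
          · exact ⟨2, 2, hx.symm, hy.symm⟩
        obtain ⟨u, v, hu, hv⟩ := this
        have he' : (u, v) ∈ M9.edges := by
          rw [hedge u v, hu, hv]
          exact (Prod.mk.eta (p := e)) ▸ he
        rw [hM] at he'
        simp only [Finset.mem_insert, Finset.mem_singleton, Prod.mk.injEq] at he'
        simp only [Finset.mem_insert, Finset.mem_singleton]
        rcases he' with ⟨rfl, rfl⟩ | ⟨rfl, rfl⟩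
        · exact Or.inl (Prod.ext hu.symm hv.symm)
        · exact Or.inr (Prod.ext hu.symm hv.symm)
      · intro e he
        simp only [Finset.mem_insert, Finset.mem_singleton] at he
        rcases he with rfl | rfl
        · exact e01
        · exact e12
    exact Prod.ext (by rw [h1]; rfl) (by rw [h2]; rfl)
  · rintro ⟨a, b, c, ⟨hab, hbc, hac, he1, he2⟩, rfl⟩
    refine ⟨?_, ?_, ![a, b, c], (iso_char M9 hM hab hbc hac _).mpr ⟨rfl, rfl, rfl⟩⟩
    · intro e he
      simp only [tripToH, Finset.mem_insert, Finset.mem_singleton] at he ⊢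
      rcases he with rfl | rfl
      · exact ⟨Or.inl rfl, Or.inr (Or.inl rfl), hab⟩
      · exact ⟨Or.inr (Or.inl rfl), Or.inr (Or.inr rfl), hbc⟩
    · intro e he
      simp only [tripToH, Finset.mem_insert, Finset.mem_singleton] at he
      rcases he with rfl | rfl
      · exact he1
      · exact he2

private lemma anch_char (M9 : Motif 3) (hM : M9.edges = {((0 : Fin 3), 1), (1, 2)})
    {a b c : Fin n} (hab : a ≠ b) (hbc : b ≠ c) (hac : a ≠ c) (i j : Fin n) :
    AnchoredPair M9 Finset.univ (tripToH a b c) i j ↔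
      (i = a ∨ i = b ∨ i = c) ∧ (j = a ∨ j = b ∨ j = c) ∧ i ≠ j := by
  constructor
  · rintro ⟨φ, hiso, u, -, v, -, huv, rfl, rfl⟩
    obtain ⟨h0, h1, h2⟩ := (iso_char M9 hM hab hbc hac φ).mp hiso
    refine ⟨?_, ?_, fun h => huv (hiso.1 h)⟩
    · fin_cases u <;> simp [h0, h1, h2]
    · fin_cases v <;> simp [h0, h1, h2]
  · rintro ⟨hi, hj, hij⟩
    have hiso : IsIso M9 (tripToH a b c) ![a, b, c] :=
      (iso_char M9 hM hab hbc hac _).mpr ⟨rfl, rfl, rfl⟩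
    rcases hi with rfl | rfl | rfl <;> rcases hj with rfl | rfl | rfl
    · exact absurd rfl hij
    · exact ⟨![i, j, c], hiso, 0, Finset.mem_univ _, 1, Finset.mem_univ _, by decide, rfl, rfl⟩
    · exact ⟨![i, b, j], hiso, 0, Finset.mem_univ _, 2, Finset.mem_univ _, by decide, rfl, rfl⟩
    · exact ⟨![j, i, c], hiso, 1, Finset.mem_univ _, 0, Finset.mem_univ _, by decide, rfl, rfl⟩
    · exact absurd rfl hij
    · exact ⟨![a, i, j], hiso, 1, Finset.mem_univ _, 2, Finset.mem_univ _, by decide, rfl, rfl⟩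
    · exact ⟨![j, b, i], hiso, 2, Finset.mem_univ _, 0, Finset.mem_univ _, by decide, rfl, rfl⟩
    · exact ⟨![a, j, i], hiso, 2, Finset.mem_univ _, 1, Finset.mem_univ _, by decide, rfl, rfl⟩
    · exact absurd rfl hij

private lemma tripToH_inj {a b c a' b' c' : Fin n} (hab : a ≠ b) (hac : a ≠ c)
    (h : tripToH a b c = tripToH a' b' c') : a = a' ∧ b = b' ∧ c = c' := by
  have h2 : ({(a, b), (b, c)} : Finset (Fin n × Fin n)) = {(a', b'), (b', c')} :=
    congrArg Prod.snd h
  have m1 : ((a, b) : Fin n × Fin n) ∈ ({(a', b'), (b', c')} : Finset (Fin n × Fin n)) := by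
    rw [← h2]; simp
  have m2 : ((b, c) : Fin n × Fin n) ∈ ({(a', b'), (b', c')} : Finset (Fin n × Fin n)) := by
    rw [← h2]; simp
  simp only [Finset.mem_insert, Finset.mem_singleton, Prod.mk.injEq] at m1 m2
  rcases m1 with ⟨rfl, rfl⟩ | ⟨rfl, rfl⟩ <;> rcases m2 with ⟨h3, h4⟩ | ⟨h3, h4⟩ <;> simp_all

private lemma reindex (M9 : Motif 3) (hM : M9.edges = {((0 : Fin 3), 1), (1, 2)})
    (G : Matrix (Fin n) (Fin n) ℝ) (i j : Fin n) :
    (∑ H : Finset (Fin n) × Finset (Fin n × Fin n),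
        if IsFuncInstance M9 G H ∧ AnchoredPair M9 Finset.univ H i j then
          ∑ e ∈ H.2, G e.1 e.2 else 0)
    = ∑ p : Fin n × Fin n × Fin n,
        if Qtrip G p.1 p.2.1 p.2.2 ∧ (i = p.1 ∨ i = p.2.1 ∨ i = p.2.2) ∧
            (j = p.1 ∨ j = p.2.1 ∨ j = p.2.2) ∧ i ≠ j
        then G p.1 p.2.1 + G p.2.1 p.2.2 else 0 := by
  rw [← Finset.sum_filter, ← Finset.sum_filter]
  refine (Finset.sum_nbij (fun p => tripToH p.1 p.2.1 p.2.2) ?_ ?_ ?_ ?_).symm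
  · rintro ⟨a, b, c⟩ hp
    simp only [Finset.mem_filter, Finset.mem_univ, true_and] at hp ⊢
    obtain ⟨hQ, hi, hj, hij⟩ := hp
    exact ⟨(inst_char M9 hM G _).mpr ⟨a, b, c, hQ, rfl⟩,
      (anch_char M9 hM hQ.1 hQ.2.1 hQ.2.2.1 i j).mpr ⟨hi, hj, hij⟩⟩
  · rintro ⟨a, b, c⟩ hp ⟨a', b', c'⟩ hp' h
    simp only [Finset.coe_filter, Set.mem_setOf_eq, Finset.mem_univ, true_and] at hp hp'
    obtain ⟨h1, h2, h3⟩ := tripToH_inj hp.1.1 hp.1.2.2.1 h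
    simp [h1, h2, h3]
  · rintro H hH
    simp only [Finset.coe_filter, Set.mem_setOf_eq, Finset.mem_univ, true_and] at hH
    obtain ⟨hinst, hanch⟩ := hH
    obtain ⟨a, b, c, hQ, rfl⟩ := (inst_char M9 hM G H).mp hinst
    obtain ⟨hi, hj, hij⟩ := (anch_char M9 hM hQ.1 hQ.2.1 hQ.2.2.1 i j).mp hanch
    exact ⟨(a, b, c), by simp [hQ, hi, hj, hij], rfl⟩
  · rintro ⟨a, b, c⟩ hp
    simp only [Finset.mem_filter, Finset.mem_univ, true_and] at hp
    have hne : ((a, b) : Fin n × Fin n) ≠ (b, c) :=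
      fun h => hp.1.1 (congrArg Prod.fst h)
    simp only [tripToH]
    rw [Finset.sum_pair hne]

private lemma ptw1 (G : Matrix (Fin n) (Fin n) ℝ) (hpos : ∀ i j, 0 ≤ G i j)
    (hdiag : ∀ i, G i i = 0) (i j c : Fin n) :
    (if Qtrip G i j c then G i j + G j c else 0)
      = Jmat G i j * (Jnmat n i c * G j c) + G i j * (Jnmat n i c * Jmat G j c) := by
  unfold Qtrip Jmat Jnmat
  by_cases e1 : (i, j) ∈ edgeFinset G
  · by_cases e2 : (j, c) ∈ edgeFinset G
    · by_cases e3 : i = c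
      · simp [e1, e2, e3]
      · have h1 : i ≠ j := (mem_edge.mp e1).1
        have h2 : j ≠ c := (mem_edge.mp e2).1
        rw [if_pos ⟨h1, h2, e3, e1, e2⟩, if_pos e1, if_pos e2, if_pos e3]
        ring
    · simp [e2, G_zero hpos hdiag e2]
  · simp [e1, G_zero hpos hdiag e1]

private lemma ptw2 (G : Matrix (Fin n) (Fin n) ℝ) (hpos : ∀ i j, 0 ≤ G i j)
    (hdiag : ∀ i, G i i = 0) (i j a : Fin n) :
    (if Qtrip G a i j then G a i + G i j else 0)
      = Jmat G i j * (G a i * Jnmat n a j) + G i j * (Jmat G a i * Jnmat n a j) := by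
  unfold Qtrip Jmat Jnmat
  by_cases e1 : (i, j) ∈ edgeFinset G
  · by_cases e2 : (a, i) ∈ edgeFinset G
    · by_cases e3 : a = j
      · simp [e1, e2, e3]
      · have h1 : i ≠ j := (mem_edge.mp e1).1
        have h2 : a ≠ i := (mem_edge.mp e2).1
        rw [if_pos ⟨h2, h1, e3, e2, e1⟩, if_pos e1, if_pos e2, if_pos e3]
        ring
    · simp [e2, G_zero hpos hdiag e2]
  · simp [e1, G_zero hpos hdiag e1]

private lemma ptw3 (G : Matrix (Fin n) (Fin n) ℝ) (hpos : ∀ i j, 0 ≤ G i j)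
    (hdiag : ∀ i, G i i = 0) (i j b : Fin n) :
    (if Qtrip G i b j then G i b + G b j else 0)
      = Jnmat n i j * (Jmat G i b * G b j) + Jnmat n i j * (G i b * Jmat G b j) := by
  unfold Qtrip Jmat Jnmat
  by_cases e1 : (i, b) ∈ edgeFinset G
  · by_cases e2 : (b, j) ∈ edgeFinset G
    · by_cases e3 : i = j
      · simp [e1, e2, e3]
      · have h1 : i ≠ b := (mem_edge.mp e1).1
        have h2 : b ≠ j := (mem_edge.mp e2).1
        rw [if_pos ⟨h1, h2, e3, e1, e2⟩, if_pos e1, if_pos e2, if_pos e3]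
        ring
    · simp [e2, G_zero hpos hdiag e2]
  · simp [e1, G_zero hpos hdiag e1]

private lemma if_split (G : Matrix (Fin n) (Fin n) ℝ) (i j a b c : Fin n) :
    (if Qtrip G a b c ∧ (i = a ∨ i = b ∨ i = c) ∧ (j = a ∨ j = b ∨ j = c) ∧ i ≠ j
      then G a b + G b c else 0)
    = (if i = a ∧ j = b ∧ Qtrip G a b c then G a b + G b c else 0)
    + (if i = b ∧ j = c ∧ Qtrip G a b c then G a b + G b c else 0)
    + (if i = a ∧ j = c ∧ Qtrip G a b c then G a b + G b c else 0)
    + (if j = a ∧ i = b ∧ Qtrip G a b c then G a b + G b c else 0)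
    + (if j = b ∧ i = c ∧ Qtrip G a b c then G a b + G b c else 0)
    + (if j = a ∧ i = c ∧ Qtrip G a b c then G a b + G b c else 0) := by
  by_cases hQ : Qtrip G a b c
  · have hab := hQ.1
    have hbc := hQ.2.1
    have hac := hQ.2.2.1
    have hba := hab.symm
    have hcb := hbc.symm
    have hca := hac.symm
    by_cases hia : i = a <;> by_cases hib : i = b <;> by_cases hic : i = c <;>
      by_cases hja : j = a <;> by_cases hjb : j = b <;> by_cases hjc : j = c <;>
      simp_all
  · simp [hQ]

private lemma triple_sum_eq (G : Matrix (Fin n) (Fin n) ℝ) (hpos : ∀ i j, 0 ≤ G i j)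
    (hdiag : ∀ i, G i i = 0) (i j : Fin n) :
    (∑ p : Fin n × Fin n × Fin n,
        if Qtrip G p.1 p.2.1 p.2.2 ∧ (i = p.1 ∨ i = p.2.1 ∨ i = p.2.2) ∧
            (j = p.1 ∨ j = p.2.1 ∨ j = p.2.2) ∧ i ≠ j
        then G p.1 p.2.1 + G p.2.1 p.2.2 else 0)
    = had (Jmat G) (Jnmat n * Gᵀ) i j + had G (Jnmat n * (Jmat G)ᵀ) i j +
        had (Jnmat n) (Jmat G * G) i j + had (Jnmat n) (G * Jmat G) i j +
        had (Jmat G) (Gᵀ * Jnmat n) i j + had G ((Jmat G)ᵀ * Jnmat n) i j +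
        (had (Jmat G) (Jnmat n * Gᵀ) j i + had G (Jnmat n * (Jmat G)ᵀ) j i +
          had (Jnmat n) (Jmat G * G) j i + had (Jnmat n) (G * Jmat G) j i +
          had (Jmat G) (Gᵀ * Jnmat n) j i + had G ((Jmat G)ᵀ * Jnmat n) j i) := by
  rw [Fintype.sum_prod_type]
  simp only [Fintype.sum_prod_type]
  have step : ∀ a b c : Fin n,
      (if Qtrip G a b c ∧ (i = a ∨ i = b ∨ i = c) ∧ (j = a ∨ j = b ∨ j = c) ∧ i ≠ j
        then G a b + G b c else 0)
      = (if i = a ∧ j = b ∧ Qtrip G a b c then G a b + G b c else 0)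
      + (if i = b ∧ j = c ∧ Qtrip G a b c then G a b + G b c else 0)
      + (if i = a ∧ j = c ∧ Qtrip G a b c then G a b + G b c else 0)
      + (if j = a ∧ i = b ∧ Qtrip G a b c then G a b + G b c else 0)
      + (if j = b ∧ i = c ∧ Qtrip G a b c then G a b + G b c else 0)
      + (if j = a ∧ i = c ∧ Qtrip G a b c then G a b + G b c else 0) :=
    fun a b c => if_split G i j a b c
  simp only [step, Finset.sum_add_distrib]
  have T1 : (∑ a : Fin n, ∑ b : Fin n, ∑ c : Fin n,
      if i = a ∧ j = b ∧ Qtrip G a b c then G a b + G b c else 0)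
      = had (Jmat G) (Jnmat n * Gᵀ) i j + had G (Jnmat n * (Jmat G)ᵀ) i j := by
    rw [Finset.sum_eq_single_of_mem i (Finset.mem_univ i) (fun x _ hx => by simp [Ne.symm hx]),
      Finset.sum_eq_single_of_mem j (Finset.mem_univ j) (fun x _ hx => by simp [Ne.symm hx])]
    simp only [had, Matrix.mul_apply, Matrix.transpose_apply]
    rw [Finset.mul_sum, Finset.mul_sum, ← Finset.sum_add_distrib]
    refine Finset.sum_congr rfl fun c _ => ?_
    simpa using ptw1 G hpos hdiag i j c
  have T2 : (∑ a : Fin n, ∑ b : Fin n, ∑ c : Fin n,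
      if i = b ∧ j = c ∧ Qtrip G a b c then G a b + G b c else 0)
      = had (Jmat G) (Gᵀ * Jnmat n) i j + had G ((Jmat G)ᵀ * Jnmat n) i j := by
    have inner : ∀ a : Fin n, (∑ b : Fin n, ∑ c : Fin n,
        if i = b ∧ j = c ∧ Qtrip G a b c then G a b + G b c else 0)
        = if Qtrip G a i j then G a i + G i j else 0 := by
      intro a
      rw [Finset.sum_eq_single_of_mem i (Finset.mem_univ i) (fun x _ hx => by simp [Ne.symm hx]),
        Finset.sum_eq_single_of_mem j (Finset.mem_univ j) (fun x _ hx => by simp [Ne.symm hx])]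
      simp
    simp only [inner]
    simp only [had, Matrix.mul_apply, Matrix.transpose_apply]
    rw [Finset.mul_sum, Finset.mul_sum, ← Finset.sum_add_distrib]
    exact Finset.sum_congr rfl fun a _ => ptw2 G hpos hdiag i j a
  have T3 : (∑ a : Fin n, ∑ b : Fin n, ∑ c : Fin n,
      if i = a ∧ j = c ∧ Qtrip G a b c then G a b + G b c else 0)
      = had (Jnmat n) (Jmat G * G) i j + had (Jnmat n) (G * Jmat G) i j := by
    rw [Finset.sum_eq_single_of_mem i (Finset.mem_univ i) (fun x _ hx => by simp [Ne.symm hx])]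
    have inner : ∀ b : Fin n, (∑ c : Fin n,
        if j = c ∧ Qtrip G i b c then G i b + G b c else 0)
        = if Qtrip G i b j then G i b + G b j else 0 := by
      intro b
      rw [Finset.sum_eq_single_of_mem j (Finset.mem_univ j) (fun x _ hx => by simp [Ne.symm hx])]
      simp
    simp only [eq_self_iff_true, true_and, inner]
    simp only [had, Matrix.mul_apply, Matrix.transpose_apply]
    rw [Finset.mul_sum, Finset.mul_sum, ← Finset.sum_add_distrib]
    exact Finset.sum_congr rfl fun b _ => ptw3 G hpos hdiag i j b
  have T4 : (∑ a : Fin n, ∑ b : Fin n, ∑ c : Fin n,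
      if j = a ∧ i = b ∧ Qtrip G a b c then G a b + G b c else 0)
      = had (Jmat G) (Jnmat n * Gᵀ) j i + had G (Jnmat n * (Jmat G)ᵀ) j i := by
    rw [Finset.sum_eq_single_of_mem j (Finset.mem_univ j) (fun x _ hx => by simp [Ne.symm hx]),
      Finset.sum_eq_single_of_mem i (Finset.mem_univ i) (fun x _ hx => by simp [Ne.symm hx])]
    simp only [had, Matrix.mul_apply, Matrix.transpose_apply]
    rw [Finset.mul_sum, Finset.mul_sum, ← Finset.sum_add_distrib]
    refine Finset.sum_congr rfl fun c _ => ?_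
    simpa using ptw1 G hpos hdiag j i c
  have T5 : (∑ a : Fin n, ∑ b : Fin n, ∑ c : Fin n,
      if j = b ∧ i = c ∧ Qtrip G a b c then G a b + G b c else 0)
      = had (Jmat G) (Gᵀ * Jnmat n) j i + had G ((Jmat G)ᵀ * Jnmat n) j i := by
    have inner : ∀ a : Fin n, (∑ b : Fin n, ∑ c : Fin n,
        if j = b ∧ i = c ∧ Qtrip G a b c then G a b + G b c else 0)
        = if Qtrip G a j i then G a j + G j i else 0 := by
      intro a
      rw [Finset.sum_eq_single_of_mem j (Finset.mem_univ j) (fun x _ hx => by simp [Ne.symm hx]),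
        Finset.sum_eq_single_of_mem i (Finset.mem_univ i) (fun x _ hx => by simp [Ne.symm hx])]
      simp
    simp only [inner]
    simp only [had, Matrix.mul_apply, Matrix.transpose_apply]
    rw [Finset.mul_sum, Finset.mul_sum, ← Finset.sum_add_distrib]
    exact Finset.sum_congr rfl fun a _ => ptw2 G hpos hdiag j i a
  have T6 : (∑ a : Fin n, ∑ b : Fin n, ∑ c : Fin n,
      if j = a ∧ i = c ∧ Qtrip G a b c then G a b + G b c else 0)
      = had (Jnmat n) (Jmat G * G) j i + had (Jnmat n) (G * Jmat G) j i := by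
    rw [Finset.sum_eq_single_of_mem j (Finset.mem_univ j) (fun x _ hx => by simp [Ne.symm hx])]
    have inner : ∀ b : Fin n, (∑ c : Fin n,
        if i = c ∧ Qtrip G j b c then G j b + G b c else 0)
        = if Qtrip G j b i then G j b + G b i else 0 := by
      intro b
      rw [Finset.sum_eq_single_of_mem i (Finset.mem_univ i) (fun x _ hx => by simp [Ne.symm hx])]
      simp
    simp only [eq_self_iff_true, true_and, inner]
    simp only [had, Matrix.mul_apply, Matrix.transpose_apply]
    rw [Finset.mul_sum, Finset.mul_sum, ← Finset.sum_add_distrib]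
    exact Finset.sum_congr rfl fun b _ => ptw3 G hpos hdiag j i b
  rw [T1, T2, T3, T4, T5, T6]
  ring

end M9Aux

/-- **Functional MAM formula for the 2-path motif `M₉`.** -/
theorem mam_M9_func
    (G : Matrix (Fin n) (Fin n) ℝ)
    (hpos : ∀ i j, 0 ≤ G i j) (hdiag : ∀ i, G i i = 0)
    (M9 : Motif 3) (hM : M9.edges = {((0 : Fin 3), 1), (1, 2)}) :
    mamFunc M9 Finset.univ G =
      (1 / 2 : ℝ) •
        (had (Jmat G) (Jnmat n * Gᵀ) + had G (Jnmat n * (Jmat G)ᵀ) +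
          had (Jnmat n) (Jmat G * G) + had (Jnmat n) (G * Jmat G) +
          had (Jmat G) (Gᵀ * Jnmat n) + had G ((Jmat G)ᵀ * Jnmat n) +
          (had (Jmat G) (Jnmat n * Gᵀ) + had G (Jnmat n * (Jmat G)ᵀ) +
            had (Jnmat n) (Jmat G * G) + had (Jnmat n) (G * Jmat G) +
            had (Jmat G) (Gᵀ * Jnmat n) + had G ((Jmat G)ᵀ * Jnmat n))ᵀ) := by
  have hcard : M9.edges.card = 2 := by rw [hM]; decide
  funext i j
  simp only [mamFunc]
  rw [reindex M9 hM G i j, triple_sum_eq G hpos hdiag i j]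
  simp only [Matrix.smul_apply, Matrix.add_apply, Matrix.transpose_apply, smul_eq_mul]
  rw [hcard]
  norm_num
end
end

section
/- Let G be a weighted directed graph on vertex set V = {1,…,n} and let M_10 be the simple in-star motif with vertices {1,2,3} and edge set E_M = {(1,3),(2,3)}. Then the functional motif adjacency matrix of M_10 in G satisfies M^func = (1/2)·(C + Cᵀ + C'), where C = J ∘ (J_n G) + G ∘ (J_n J) and C' = J_n ∘ (J Gᵀ) + J_n ∘ (G Jᵀ). -/
open scoped Classical BigOperators Matrix

noncomputable section

variable {n m : ℕ}

section AuxM10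

variable {n : ℕ}

lemma mem_edgeFinset_iff (G : Matrix (Fin n) (Fin n) ℝ) {a b : Fin n} :
    (a, b) ∈ edgeFinset G ↔ a ≠ b ∧ 0 < G a b := by
  simp [edgeFinset]

lemma edge_ne (G : Matrix (Fin n) (Fin n) ℝ) {a b : Fin n}
    (h : (a, b) ∈ edgeFinset G) : a ≠ b := ((mem_edgeFinset_iff G).1 h).1

lemma not_edge_eq_zero (G : Matrix (Fin n) (Fin n) ℝ)
    (hpos : ∀ i j, 0 ≤ G i j) (hdiag : ∀ i, G i i = 0) {a b : Fin n}
    (h : (a, b) ∉ edgeFinset G) : G a b = 0 := by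
  by_cases hab : a = b
  · subst hab; exact hdiag a
  · rcases (hpos a b).lt_or_eq with hlt | he
    · exact absurd ((mem_edgeFinset_iff G).2 ⟨hab, hlt⟩) h
    · exact he.symm

/-- The instance graph of the in-star motif on vertices `x, y, z`. -/
def Hof (x y z : Fin n) : Finset (Fin n) × Finset (Fin n × Fin n) :=
  ({x, y, z}, {(x, z), (y, z)})

lemma image_univ_fin3 {α : Type*} [DecidableEq α] (φ : Fin 3 → α) :
    Finset.image φ Finset.univ = {φ 0, φ 1, φ 2} := by
  have h : (Finset.univ : Finset (Fin 3)) = {0, 1, 2} := by decide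
  rw [h]
  simp [Finset.image_insert]

lemma iso_Hof (M10 : Motif 3) (hM : M10.edges = {((0 : Fin 3), 2), (1, 2)})
    {x y z : Fin n} (hxy : x ≠ y) (hxz : x ≠ z) (hyz : y ≠ z) :
    IsIso M10 (Hof x y z) ![x, y, z] := by
  refine ⟨?_, ?_, ?_⟩
  · intro u v huv
    fin_cases u <;> fin_cases v <;> simp_all [Matrix.cons_val_zero, Matrix.cons_val_one,
      Matrix.head_cons, Matrix.cons_val_two, Matrix.tail_cons, hxy, hxz, hyz]
  · rw [image_univ_fin3]
    simp [Hof]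
  · intro u v
    rw [hM]
    fin_cases u <;> fin_cases v <;>
      simp [Hof, Prod.ext_iff, hxy, hxz, hyz, hxy.symm, hxz.symm, hyz.symm,
        Matrix.cons_val_zero, Matrix.cons_val_one, Matrix.head_cons,
        Matrix.cons_val_two, Matrix.tail_cons]

lemma char_M10 (G : Matrix (Fin n) (Fin n) ℝ) (M10 : Motif 3)
    (hM : M10.edges = {((0 : Fin 3), 2), (1, 2)})
    (H : Finset (Fin n) × Finset (Fin n × Fin n)) (i j : Fin n) :
    (IsFuncInstance M10 G H ∧ AnchoredPair M10 Finset.univ H i j) ↔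
      ∃ x y z : Fin n, x ≠ y ∧ x ≠ z ∧ y ≠ z ∧
        (x, z) ∈ edgeFinset G ∧ (y, z) ∈ edgeFinset G ∧ H = Hof x y z ∧
        (i = x ∨ i = y ∨ i = z) ∧ (j = x ∨ j = y ∨ j = z) ∧ i ≠ j := by
  constructor
  · rintro ⟨⟨hGP, hsub, -⟩, φ, ⟨hinj, himg, hedge⟩, a, -, b, -, hab, rfl, rfl⟩
    have h02 : ((0 : Fin 3), (2 : Fin 3)) ∈ M10.edges := by rw [hM]; decide
    have h12 : ((1 : Fin 3), (2 : Fin 3)) ∈ M10.edges := by rw [hM]; decide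
    refine ⟨φ 0, φ 1, φ 2, hinj.ne (by decide), hinj.ne (by decide), hinj.ne (by decide),
      hsub ((hedge 0 2).1 h02), hsub ((hedge 1 2).1 h12), ?_, ?_, ?_, hinj.ne hab⟩
    · have hV : H.1 = {φ 0, φ 1, φ 2} := by rw [← himg, image_univ_fin3]
      have hE : H.2 = {(φ 0, φ 2), (φ 1, φ 2)} := by
        ext e
        constructor
        · intro he
          obtain ⟨h1, h2, -⟩ := hGP e he
          rw [← himg] at h1 h2
          obtain ⟨u, -, hu⟩ := Finset.mem_image.1 h1
          obtain ⟨v, -, hv⟩ := Finset.mem_image.1 h2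
          have huv : (u, v) ∈ M10.edges := by
            rw [hedge u v, hu, hv]
            exact he
          rw [hM] at huv
          simp only [Finset.mem_insert, Finset.mem_singleton, Prod.ext_iff] at huv ⊢
          rcases huv with ⟨hu', hv'⟩ | ⟨hu', hv'⟩
          · subst hu'; subst hv'
            exact Or.inl ⟨hu.symm, hv.symm⟩
          · subst hu'; subst hv'
            exact Or.inr ⟨hu.symm, hv.symm⟩
        · intro he
          simp only [Finset.mem_insert, Finset.mem_singleton] at he
          rcases he with rfl | rfl
          · exact (hedge 0 2).1 h02
          · exact (hedge 1 2).1 h12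
      rw [Hof, ← hV, ← hE]
    · fin_cases a <;> simp
    · fin_cases b <;> simp
  · rintro ⟨x, y, z, hxy, hxz, hyz, hex, hey, rfl, hi, hj, hij⟩
    have hiso := iso_Hof M10 hM hxy hxz hyz
    refine ⟨⟨?_, ?_, ![x, y, z], hiso⟩, ![x, y, z], hiso, ?_⟩
    · intro e he
      simp only [Hof, Finset.mem_insert, Finset.mem_singleton] at he
      rcases he with rfl | rfl
      · exact ⟨by simp [Hof], by simp [Hof], hxz⟩
      · exact ⟨by simp [Hof], by simp [Hof], hyz⟩
    · intro e he
      simp only [Hof, Finset.mem_insert, Finset.mem_singleton] at he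
      rcases he with rfl | rfl
      · exact hex
      · exact hey
    · rcases hi with rfl | rfl | rfl <;> rcases hj with rfl | rfl | rfl
      · exact absurd rfl hij
      · exact ⟨0, Finset.mem_univ _, 1, Finset.mem_univ _, by decide, rfl, rfl⟩
      · exact ⟨0, Finset.mem_univ _, 2, Finset.mem_univ _, by decide, rfl, rfl⟩
      · exact ⟨1, Finset.mem_univ _, 0, Finset.mem_univ _, by decide, rfl, rfl⟩
      · exact absurd rfl hij
      · exact ⟨1, Finset.mem_univ _, 2, Finset.mem_univ _, by decide, rfl, rfl⟩
      · exact ⟨2, Finset.mem_univ _, 0, Finset.mem_univ _, by decide, rfl, rfl⟩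
      · exact ⟨2, Finset.mem_univ _, 1, Finset.mem_univ _, by decide, rfl, rfl⟩
      · exact absurd rfl hij

/-- The condition for `(x, y, z)` to give an instance of `M₁₀` anchored at `{i, j}`. -/
def Qpred (G : Matrix (Fin n) (Fin n) ℝ) (i j x y z : Fin n) : Prop :=
  x ≠ y ∧ x ≠ z ∧ y ≠ z ∧ (x, z) ∈ edgeFinset G ∧ (y, z) ∈ edgeFinset G ∧
    (i = x ∨ i = y ∨ i = z) ∧ (j = x ∨ j = y ∨ j = z) ∧ i ≠ j

/-- The weight contribution of the triple `(x, y, z)`. -/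
def Fval (G : Matrix (Fin n) (Fin n) ℝ) (i j x y z : Fin n) : ℝ :=
  if Qpred G i j x y z then G x z + G y z else 0

lemma Qpred_swap (G : Matrix (Fin n) (Fin n) ℝ) (i j x y z : Fin n) :
    Qpred G i j y x z ↔ Qpred G i j x y z := by
  have ror : ∀ {P Q R : Prop}, (P ∨ Q ∨ R) → (Q ∨ P ∨ R) := fun h =>
    h.elim (fun p => Or.inr (Or.inl p)) (fun h' => h'.elim Or.inl fun r => Or.inr (Or.inr r))
  unfold Qpred
  constructor <;> rintro ⟨a1, a2, a3, a4, a5, a6, a7, a8⟩ <;>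
    exact ⟨Ne.symm a1, a3, a2, a5, a4, ror a6, ror a7, a8⟩

lemma Qpred_anchor_swap (G : Matrix (Fin n) (Fin n) ℝ) (i j x y z : Fin n) :
    Qpred G j i x y z ↔ Qpred G i j x y z := by
  unfold Qpred
  constructor <;> rintro ⟨a1, a2, a3, a4, a5, a6, a7, a8⟩ <;>
    exact ⟨a1, a2, a3, a4, a5, a7, a6, Ne.symm a8⟩

lemma Fval_swap (G : Matrix (Fin n) (Fin n) ℝ) (i j x y z : Fin n) :
    Fval G i j y x z = Fval G i j x y z := by
  simp only [Fval, Qpred_swap G i j x y z, add_comm]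

lemma Fval_anchor_swap (G : Matrix (Fin n) (Fin n) ℝ) (i j x y z : Fin n) :
    Fval G j i x y z = Fval G i j x y z := by
  simp only [Fval, Qpred_anchor_swap G i j x y z]

lemma key_sum (G : Matrix (Fin n) (Fin n) ℝ) (M10 : Motif 3)
    (hM : M10.edges = {((0 : Fin 3), 2), (1, 2)}) (i j : Fin n) :
    (∑ H : Finset (Fin n) × Finset (Fin n × Fin n),
      if IsFuncInstance M10 G H ∧ AnchoredPair M10 Finset.univ H i j
        then ∑ e ∈ H.2, G e.1 e.2 else 0) =
    (1 / 2 : ℝ) * ∑ t : Fin n × Fin n × Fin n, Fval G i j t.1 t.2.1 t.2.2 := by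
  classical
  set w : Finset (Fin n) × Finset (Fin n × Fin n) → ℝ := fun H => ∑ e ∈ H.2, G e.1 e.2 with hw
  set Hmap : Fin n × Fin n × Fin n → Finset (Fin n) × Finset (Fin n × Fin n) :=
    fun t => Hof t.1 t.2.1 t.2.2 with hHmap
  set T : Finset (Fin n × Fin n × Fin n) :=
    Finset.univ.filter fun t => Qpred G i j t.1 t.2.1 t.2.2 with hT
  have hswapmem : ∀ x y z : Fin n, (x, y, z) ∈ T → (y, x, z) ∈ T := by
    intro x y z hx
    simp only [hT, Finset.mem_filter, Finset.mem_univ, true_and] at hx ⊢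
    exact (Qpred_swap G i j y x z).1 hx
  have hHswap : ∀ x y z : Fin n, Hmap (y, x, z) = Hmap (x, y, z) := by
    intro x y z
    simp only [hHmap, Hof, Prod.mk.injEq]
    constructor
    · exact Finset.insert_comm y x {z}
    · exact Finset.pair_comm (y, z) (x, z)
  have hLHS : (∑ H : Finset (Fin n) × Finset (Fin n × Fin n),
      if IsFuncInstance M10 G H ∧ AnchoredPair M10 Finset.univ H i j then w H else 0)
      = ∑ H ∈ Finset.univ.filter
          (fun H => IsFuncInstance M10 G H ∧ AnchoredPair M10 Finset.univ H i j), w H :=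
    (Finset.sum_filter _ _).symm
  have himg : Finset.univ.filter
      (fun H => IsFuncInstance M10 G H ∧ AnchoredPair M10 Finset.univ H i j)
      = T.image Hmap := by
    ext H
    simp only [Finset.mem_filter, Finset.mem_image, Finset.mem_univ, true_and, hT, hHmap]
    rw [char_M10 G M10 hM H i j]
    constructor
    · rintro ⟨x, y, z, h1, h2, h3, h4, h5, rfl, h6, h7, h8⟩
      exact ⟨(x, y, z), ⟨h1, h2, h3, h4, h5, h6, h7, h8⟩, rfl⟩
    · rintro ⟨⟨x, y, z⟩, ⟨h1, h2, h3, h4, h5, h6, h7, h8⟩, rfl⟩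
      exact ⟨x, y, z, h1, h2, h3, h4, h5, rfl, h6, h7, h8⟩
  have hfiber : ∀ b ∈ T.image Hmap, (T.filter fun t => Hmap t = b).card = 2 := by
    rintro b hb
    obtain ⟨⟨x, y, z⟩, ht, rfl⟩ := Finset.mem_image.1 hb
    have hQ : Qpred G i j x y z := by
      simpa only [hT, Finset.mem_filter, Finset.mem_univ, true_and] using ht
    obtain ⟨hxy, hxz, hyz, -, -, -, -, -⟩ := hQ
    have hset : (T.filter fun t => Hmap t = Hmap (x, y, z)) = {(x, y, z), (y, x, z)} := by
      ext ⟨x', y', z'⟩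
      simp only [Finset.mem_filter, Finset.mem_insert, Finset.mem_singleton]
      constructor
      · rintro ⟨hmem, heq⟩
        have hx'y' : x' ≠ y' := by
          have := (Finset.mem_filter.1 hmem).2
          exact this.1
        have hE : ({(x', z'), (y', z')} : Finset (Fin n × Fin n)) = {(x, z), (y, z)} := by
          have := congrArg Prod.snd heq
          simpa [hHmap, Hof] using this
        have h1 : ((x', z') : Fin n × Fin n) ∈ ({(x, z), (y, z)} : Finset (Fin n × Fin n)) := by
          rw [← hE]; simp
        have h2 : ((y', z') : Fin n × Fin n) ∈ ({(x, z), (y, z)} : Finset (Fin n × Fin n)) := by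
          rw [← hE]; simp
        simp only [Finset.mem_insert, Finset.mem_singleton, Prod.mk.injEq] at h1 h2
        rcases h1 with ⟨rfl, rfl⟩ | ⟨rfl, rfl⟩
        · rcases h2 with ⟨rfl, -⟩ | ⟨rfl, -⟩
          · exact absurd rfl hx'y'
          · exact Or.inl rfl
        · rcases h2 with ⟨rfl, -⟩ | ⟨rfl, -⟩
          · exact Or.inr rfl
          · exact absurd rfl hx'y'
      · rintro (h | h)
        · rw [h]
          exact ⟨ht, rfl⟩
        · rw [h]
          exact ⟨hswapmem x y z ht, hHswap x y z⟩
    rw [hset]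
    refine Finset.card_pair ?_
    intro hcontra
    rw [Prod.ext_iff] at hcontra
    exact hxy hcontra.1
  have hcomp : ∑ t ∈ T, w (Hmap t) = 2 * ∑ b ∈ T.image Hmap, w b := by
    rw [Finset.sum_comp w Hmap]
    rw [Finset.sum_congr rfl fun b hb => by rw [hfiber b hb]]
    rw [Finset.mul_sum]
    exact Finset.sum_congr rfl fun b _ => by rw [two_smul]; ring
  have hval : ∑ t ∈ T, w (Hmap t) = ∑ t : Fin n × Fin n × Fin n, Fval G i j t.1 t.2.1 t.2.2 := by
    have : ∀ t : Fin n × Fin n × Fin n, Fval G i j t.1 t.2.1 t.2.2 =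
        if Qpred G i j t.1 t.2.1 t.2.2 then w (Hmap t) else 0 := by
      rintro ⟨x, y, z⟩
      simp only [Fval]
      by_cases hQ : Qpred G i j x y z
      · rw [if_pos hQ, if_pos hQ]
        have hxy : x ≠ y := hQ.1
        have hne : ((x, z) : Fin n × Fin n) ≠ (y, z) := by
          intro h; exact hxy (congrArg Prod.fst h)
        simp only [hw, hHmap, Hof]
        rw [Finset.sum_pair hne]
      · rw [if_neg hQ, if_neg hQ]
    rw [Finset.sum_congr rfl fun t _ => (this t)]
    rw [← Finset.sum_filter]
  rw [hLHS, himg, ← hval, hcomp]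
  ring

lemma Fval_split (G : Matrix (Fin n) (Fin n) ℝ) (i j x y z : Fin n) :
    Fval G i j x y z =
      (if x = i ∧ y = j then Fval G i j x y z else 0) +
      (if x = j ∧ y = i then Fval G i j x y z else 0) +
      (if x = i ∧ z = j then Fval G i j x y z else 0) +
      (if y = i ∧ z = j then Fval G i j x y z else 0) +
      (if x = j ∧ z = i then Fval G i j x y z else 0) +
      (if y = j ∧ z = i then Fval G i j x y z else 0) := by
  by_cases hQ : Qpred G i j x y z
  · obtain ⟨hxy, hxz, hyz, -, -, hi, hj, hij⟩ := hQ
    rcases hi with rfl | rfl | rfl <;> rcases hj with rfl | rfl | rfl <;>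
      first
        | exact absurd rfl hij
        | simp [hxy, hxz, hyz, hij, Ne.symm hxy, Ne.symm hxz, Ne.symm hyz, Ne.symm hij]
  · simp [Fval, hQ]

lemma collapseXY (f : Fin n → Fin n → Fin n → ℝ) (a b : Fin n) :
    (∑ x : Fin n, ∑ y : Fin n, ∑ z : Fin n, if x = a ∧ y = b then f x y z else 0)
      = ∑ z : Fin n, f a b z := by
  have h1 : ∀ x y : Fin n, (∑ z : Fin n, if x = a ∧ y = b then f x y z else 0)
      = if x = a ∧ y = b then ∑ z : Fin n, f x y z else 0 := by
    intro x y
    by_cases h : x = a ∧ y = b <;> simp [h]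
  simp_rw [h1]
  have h2 : ∀ x : Fin n, (∑ y : Fin n, if x = a ∧ y = b then ∑ z : Fin n, f x y z else 0)
      = if x = a then ∑ z : Fin n, f x b z else 0 := by
    intro x
    by_cases h : x = a <;> simp [h, Finset.sum_ite_eq']
  simp_rw [h2]
  simp [Finset.sum_ite_eq']

lemma collapseXZ (f : Fin n → Fin n → Fin n → ℝ) (a b : Fin n) :
    (∑ x : Fin n, ∑ y : Fin n, ∑ z : Fin n, if x = a ∧ z = b then f x y z else 0)
      = ∑ y : Fin n, f a y b := by
  have h1 : ∀ x y : Fin n, (∑ z : Fin n, if x = a ∧ z = b then f x y z else 0)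
      = if x = a then f x y b else 0 := by
    intro x y
    by_cases h : x = a <;> simp [h, Finset.sum_ite_eq']
  simp_rw [h1]
  simp [Finset.sum_ite_eq']

lemma collapseYZ (f : Fin n → Fin n → Fin n → ℝ) (a b : Fin n) :
    (∑ x : Fin n, ∑ y : Fin n, ∑ z : Fin n, if y = a ∧ z = b then f x y z else 0)
      = ∑ x : Fin n, f x a b := by
  have h1 : ∀ x y : Fin n, (∑ z : Fin n, if y = a ∧ z = b then f x y z else 0)
      = if y = a then f x y b else 0 := by
    intro x y
    by_cases h : y = a <;> simp [h, Finset.sum_ite_eq']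
  simp_rw [h1]
  simp [Finset.sum_ite_eq']

lemma triple_sum (G : Matrix (Fin n) (Fin n) ℝ) (i j : Fin n) :
    ∑ t : Fin n × Fin n × Fin n, Fval G i j t.1 t.2.1 t.2.2
      = 2 * ((∑ k : Fin n, Fval G i j i j k) + (∑ k : Fin n, Fval G i j i k j)
          + (∑ k : Fin n, Fval G i j j k i)) := by
  rw [Fintype.sum_prod_type]
  simp_rw [Fintype.sum_prod_type]
  calc
    ∑ x : Fin n, ∑ y : Fin n, ∑ z : Fin n, Fval G i j x y z
        = ∑ x : Fin n, ∑ y : Fin n, ∑ z : Fin n,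
            ((if x = i ∧ y = j then Fval G i j x y z else 0) +
             (if x = j ∧ y = i then Fval G i j x y z else 0) +
             (if x = i ∧ z = j then Fval G i j x y z else 0) +
             (if y = i ∧ z = j then Fval G i j x y z else 0) +
             (if x = j ∧ z = i then Fval G i j x y z else 0) +
             (if y = j ∧ z = i then Fval G i j x y z else 0)) := by
          simp_rw [← Fval_split]
    _ = (∑ x : Fin n, ∑ y : Fin n, ∑ z : Fin n, if x = i ∧ y = j then Fval G i j x y z else 0) +
        (∑ x : Fin n, ∑ y : Fin n, ∑ z : Fin n, if x = j ∧ y = i then Fval G i j x y z else 0) +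
        (∑ x : Fin n, ∑ y : Fin n, ∑ z : Fin n, if x = i ∧ z = j then Fval G i j x y z else 0) +
        (∑ x : Fin n, ∑ y : Fin n, ∑ z : Fin n, if y = i ∧ z = j then Fval G i j x y z else 0) +
        (∑ x : Fin n, ∑ y : Fin n, ∑ z : Fin n, if x = j ∧ z = i then Fval G i j x y z else 0) +
        (∑ x : Fin n, ∑ y : Fin n, ∑ z : Fin n, if y = j ∧ z = i then Fval G i j x y z else 0) := by
          simp_rw [Finset.sum_add_distrib]
    _ = (∑ k : Fin n, Fval G i j i j k) + (∑ k : Fin n, Fval G i j j i k) +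
        (∑ k : Fin n, Fval G i j i k j) + (∑ k : Fin n, Fval G i j k i j) +
        (∑ k : Fin n, Fval G i j j k i) + (∑ k : Fin n, Fval G i j k j i) := by
          rw [collapseXY, collapseXY, collapseXZ, collapseYZ, collapseXZ, collapseYZ]
    _ = _ := by
          simp_rw [Fval_swap G i j j i, Fval_swap G i j i _ j, Fval_swap G i j j _ i]
          ring

lemma Fval_A (G : Matrix (Fin n) (Fin n) ℝ)
    (hpos : ∀ i j, 0 ≤ G i j) (hdiag : ∀ i, G i i = 0) (i j k : Fin n) :
    Fval G i j i j k = Jnmat n i j * (Jmat G i k * G j k + G i k * Jmat G j k) := by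
  by_cases h1 : (i, k) ∈ edgeFinset G
  · by_cases h2 : (j, k) ∈ edgeFinset G
    · by_cases h3 : i = j
      · have hnQ : ¬ Qpred G i j i j k := fun hQ => hQ.1 h3
        unfold Fval
        rw [if_neg hnQ]
        simp [Jnmat, h3]
      · have hQ : Qpred G i j i j k :=
          ⟨h3, edge_ne G h1, edge_ne G h2, h1, h2, Or.inl rfl, Or.inr (Or.inl rfl), h3⟩
        unfold Fval
        rw [if_pos hQ]
        simp [Jmat, Jnmat, h1, h2, h3]
        try ring
    · have hnQ : ¬ Qpred G i j i j k := fun hQ => h2 hQ.2.2.2.2.1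
      unfold Fval
      rw [if_neg hnQ]
      simp [Jmat, h2, not_edge_eq_zero G hpos hdiag h2]
  · have hnQ : ¬ Qpred G i j i j k := fun hQ => h1 hQ.2.2.2.1
    unfold Fval
    rw [if_neg hnQ]
    simp [Jmat, h1, not_edge_eq_zero G hpos hdiag h1]

lemma Fval_B (G : Matrix (Fin n) (Fin n) ℝ)
    (hpos : ∀ i j, 0 ≤ G i j) (hdiag : ∀ i, G i i = 0) (i j k : Fin n) :
    Fval G i j i k j = Jmat G i j * (Jnmat n i k * G k j) + G i j * (Jnmat n i k * Jmat G k j) := by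
  by_cases h1 : (i, j) ∈ edgeFinset G
  · by_cases h2 : (k, j) ∈ edgeFinset G
    · by_cases h3 : i = k
      · have hnQ : ¬ Qpred G i j i k j := fun hQ => hQ.1 h3
        unfold Fval
        rw [if_neg hnQ]
        simp [Jnmat, h3]
      · have hQ : Qpred G i j i k j :=
          ⟨h3, edge_ne G h1, edge_ne G h2, h1, h2, Or.inl rfl, Or.inr (Or.inr rfl),
            edge_ne G h1⟩
        unfold Fval
        rw [if_pos hQ]
        simp [Jmat, Jnmat, h1, h2, h3]
        try ring
    · have hnQ : ¬ Qpred G i j i k j := fun hQ => h2 hQ.2.2.2.2.1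
      unfold Fval
      rw [if_neg hnQ]
      simp [Jmat, h2, not_edge_eq_zero G hpos hdiag h2]
  · have hnQ : ¬ Qpred G i j i k j := fun hQ => h1 hQ.2.2.2.1
    unfold Fval
    rw [if_neg hnQ]
    simp [Jmat, h1, not_edge_eq_zero G hpos hdiag h1]

end AuxM10

/-- **Functional MAM formula for the in-star motif `M₁₀`.** -/
theorem mam_M10_func
    (G : Matrix (Fin n) (Fin n) ℝ)
    (hpos : ∀ i j, 0 ≤ G i j) (hdiag : ∀ i, G i i = 0)
    (M10 : Motif 3) (hM : M10.edges = {((0 : Fin 3), 2), (1, 2)}) :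
    mamFunc M10 Finset.univ G =
      (1 / 2 : ℝ) •
        (had (Jmat G) (Jnmat n * G) + had G (Jnmat n * Jmat G) +
          (had (Jmat G) (Jnmat n * G) + had G (Jnmat n * Jmat G))ᵀ +
          (had (Jnmat n) (Jmat G * Gᵀ) + had (Jnmat n) (G * (Jmat G)ᵀ))) := by
  have hcardn : M10.edges.card = 2 := by rw [hM]; decide
  funext i j
  have hA : (∑ k : Fin n, Fval G i j i j k)
      = Jnmat n i j * (∑ k : Fin n, Jmat G i k * G j k)
        + Jnmat n i j * (∑ k : Fin n, G i k * Jmat G j k) := by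
    simp_rw [Fval_A G hpos hdiag i j, mul_add]
    rw [Finset.sum_add_distrib, ← Finset.mul_sum, ← Finset.mul_sum]
  have hB : (∑ k : Fin n, Fval G i j i k j)
      = Jmat G i j * (∑ k : Fin n, Jnmat n i k * G k j)
        + G i j * (∑ k : Fin n, Jnmat n i k * Jmat G k j) := by
    simp_rw [Fval_B G hpos hdiag i j]
    rw [Finset.sum_add_distrib, ← Finset.mul_sum, ← Finset.mul_sum]
  have hC : (∑ k : Fin n, Fval G i j j k i)
      = Jmat G j i * (∑ k : Fin n, Jnmat n j k * G k i)
        + G j i * (∑ k : Fin n, Jnmat n j k * Jmat G k i) := by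
    have hsw : ∀ k, Fval G i j j k i = Fval G j i j k i :=
      fun k => Fval_anchor_swap G j i j k i
    simp_rw [hsw, Fval_B G hpos hdiag j i]
    rw [Finset.sum_add_distrib, ← Finset.mul_sum, ← Finset.mul_sum]
  simp only [mamFunc]
  rw [key_sum G M10 hM i j, triple_sum G i j, hA, hB, hC, hcardn]
  simp only [Matrix.smul_apply, Matrix.add_apply, Matrix.transpose_apply, Matrix.mul_apply,
    had, smul_eq_mul]
  push_cast
  ring
end
end
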